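/- arXiv:2012.08324 — 3 statements merged into one kernel-verified Lean document; each statement's English description precedes it below -/
import Mathlib

section
/- Let C be a 2-copula satisfying C(v,v) < v for all v ∈ (0,1). Then C is idempotent (C * C = C) and stochastically monotone (u ↦ C(u,v) concave for each v, or convex for each v) if and only if C(u,v) = uv for all u,v. -/
open MeasureTheory Set Filter

def IsCopula (C : ℝ → ℝ → ℝ) : Prop :=
  (∀ u ∈ Icc (0:ℝ) 1, C u 0 = 0 ∧ C u 1 = u) ∧
  (∀ v ∈ Icc (0:ℝ) 1, C 0 v = 0 ∧ C 1 v = v) ∧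
  (∀ u₁ u₂ v₁ v₂ : ℝ, u₁ ∈ Icc (0:ℝ) 1 → u₂ ∈ Icc (0:ℝ) 1 →
    v₁ ∈ Icc (0:ℝ) 1 → v₂ ∈ Icc (0:ℝ) 1 → u₁ ≤ u₂ → v₁ ≤ v₂ →
    0 ≤ C u₂ v₂ - C u₂ v₁ - C u₁ v₂ + C u₁ v₁)

/-- Markov product of two copulas: (C₁ * C₂)(u,v) = ∫₀¹ ∂₂C₁(u,t) ∂₁C₂(t,v) dt. -/
noncomputable def MarkovProduct (C₁ C₂ : ℝ → ℝ → ℝ) (u v : ℝ) : ℝ :=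
  ∫ t in (0:ℝ)..1, deriv (fun s => C₁ u s) t * deriv (fun s => C₂ s v) t

/-- Stochastically increasing in the first component: u ↦ C(u,v) is concave for each v. -/
def StochIncr (C : ℝ → ℝ → ℝ) : Prop :=
  ∀ v ∈ Icc (0:ℝ) 1, ConcaveOn ℝ (Icc (0:ℝ) 1) (fun u => C u v)

/-- Stochastically decreasing in the first component: u ↦ C(u,v) is convex for each v. -/
def StochDecr (C : ℝ → ℝ → ℝ) : Prop :=
  ∀ v ∈ Icc (0:ℝ) 1, ConvexOn ℝ (Icc (0:ℝ) 1) (fun u => C u v)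

namespace CopulaPiAux


noncomputable def clamp (x : ℝ) : ℝ := max 0 (min 1 x)

lemma clamp_mem (x : ℝ) : clamp x ∈ Icc (0:ℝ) 1 :=
  ⟨le_max_left _ _, max_le zero_le_one (min_le_left _ _)⟩

lemma clamp_of_mem {x : ℝ} (h : x ∈ Icc (0:ℝ) 1) : clamp x = x := by
  unfold clamp
  rw [min_eq_right h.2, max_eq_right h.1]

lemma clamp_mono : Monotone clamp := by
  intro x y h
  exact max_le_max le_rfl (min_le_min le_rfl h)

lemma clamp_lip {x y : ℝ} (h : x ≤ y) : clamp y - clamp x ≤ y - x := by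
  unfold clamp
  rcases le_total x 0 with hx | hx <;> rcases le_total 1 y with hy | hy <;>
    simp only [max_def, min_def] <;> split_ifs <;> linarith

/-- A function that is monotone and 1-Lipschitz on `[0,1]`. -/
structure NiceFn (F : ℝ → ℝ) : Prop where
  mono : ∀ ⦃x y : ℝ⦄, x ∈ Icc (0:ℝ) 1 → y ∈ Icc (0:ℝ) 1 → x ≤ y → F x ≤ F y
  lip : ∀ ⦃x y : ℝ⦄, x ∈ Icc (0:ℝ) 1 → y ∈ Icc (0:ℝ) 1 → x ≤ y → F y - F x ≤ y - x

namespace NiceFn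

variable {F : ℝ → ℝ}

lemma ext_mono (h : NiceFn F) : Monotone (fun x => F (clamp x)) :=
  fun x y hxy => h.mono (clamp_mem x) (clamp_mem y) (clamp_mono hxy)

lemma ext_lip (h : NiceFn F) : ∀ ⦃x y : ℝ⦄, x ≤ y → F (clamp y) - F (clamp x) ≤ y - x := by
  intro x y hxy
  calc F (clamp y) - F (clamp x) ≤ clamp y - clamp x :=
        h.lip (clamp_mem x) (clamp_mem y) (clamp_mono hxy)
    _ ≤ y - x := clamp_lip hxy

lemma ext_cont (h : NiceFn F) : Continuous (fun x => F (clamp x)) := by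
  have : LipschitzWith 1 (fun x => F (clamp x)) := by
    apply LipschitzWith.of_dist_le_mul
    intro x y
    rw [Real.dist_eq, Real.dist_eq, NNReal.coe_one, one_mul]
    rcases le_total x y with hxy | hxy
    · have h1 : F (clamp x) ≤ F (clamp y) := h.ext_mono hxy
      have h2 := h.ext_lip hxy
      rw [abs_sub_comm (F (clamp x)) (F (clamp y)), abs_sub_comm x y,
        abs_of_nonneg (by linarith : (0:ℝ) ≤ F (clamp y) - F (clamp x)),
        abs_of_nonneg (by linarith : (0:ℝ) ≤ y - x)]
      linarith
    · have h1 : F (clamp y) ≤ F (clamp x) := h.ext_mono hxy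
      have h2 := h.ext_lip hxy
      rw [abs_of_nonneg (by linarith : (0:ℝ) ≤ F (clamp x) - F (clamp y)),
        abs_of_nonneg (by linarith : (0:ℝ) ≤ x - y)]
      linarith
  exact this.continuous

/-- The Stieltjes function associated to the clamped extension. -/
noncomputable def stf (h : NiceFn F) : StieltjesFunction ℝ :=
  ⟨fun x => F (clamp x), h.ext_mono, fun x => (h.ext_cont).continuousWithinAt⟩

lemma stf_apply (h : NiceFn F) (x : ℝ) : h.stf x = F (clamp x) := rfl

lemma stf_measure_Ioc (h : NiceFn F) (a b : ℝ) :
    h.stf.measure (Ioc a b) = ENNReal.ofReal (F (clamp b) - F (clamp a)) := by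
  rw [h.stf.measure_Ioc]; rfl

lemma finite (h : NiceFn F) : IsFiniteMeasure h.stf.measure := by
  apply StieltjesFunction.isFiniteMeasure (l := F 0) (u := F 1)
  · apply Tendsto.congr' _ tendsto_const_nhds
    filter_upwards [eventually_le_atBot (0:ℝ)] with x hx
    have : clamp x = 0 := by
      unfold clamp; rw [min_eq_right (by linarith), max_eq_left hx]
    simp [stf_apply, this]
  · apply Tendsto.congr' _ tendsto_const_nhds
    filter_upwards [eventually_ge_atTop (1:ℝ)] with x hx
    have hc : clamp x = 1 := by
      unfold clamp; rw [min_eq_left hx]; exact max_eq_right zero_le_one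
    simp [stf_apply, hc]

/-- Stieltjes function of `x ↦ x - F (clamp x)`. -/
noncomputable def costf (h : NiceFn F) : StieltjesFunction ℝ :=
  ⟨fun x => x - F (clamp x),
   fun x y hxy => by dsimp; linarith [h.ext_lip hxy],
   fun x => (continuous_id.sub h.ext_cont).continuousWithinAt⟩

lemma measure_add_co (h : NiceFn F) : h.stf.measure + h.costf.measure = volume := by
  haveI : IsLocallyFiniteMeasure (h.stf.measure + h.costf.measure) := by
    refine ⟨fun x => ?_⟩
    obtain ⟨s, hs, h1⟩ := h.stf.measure.finiteAt_nhds x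
    obtain ⟨t, ht, h2⟩ := h.costf.measure.finiteAt_nhds x
    refine ⟨s ∩ t, inter_mem hs ht, ?_⟩
    rw [Measure.add_apply]
    exact ENNReal.add_lt_top.2 ⟨lt_of_le_of_lt (measure_mono inter_subset_left) h1,
      lt_of_le_of_lt (measure_mono inter_subset_right) h2⟩
  apply MeasureTheory.Measure.ext_of_Ioc
  intro a b hab
  rw [Measure.add_apply, h.stf_measure_Ioc, (h.costf).measure_Ioc, Real.volume_Ioc]
  show ENNReal.ofReal (F (clamp b) - F (clamp a)) +
      ENNReal.ofReal ((b - F (clamp b)) - (a - F (clamp a))) = ENNReal.ofReal (b - a)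
  have h1 : 0 ≤ F (clamp b) - F (clamp a) :=
    sub_nonneg.2 (h.mono (clamp_mem a) (clamp_mem b) (clamp_mono hab.le))
  have h4 : F (clamp b) - F (clamp a) ≤ b - a := h.ext_lip hab.le
  rw [← ENNReal.ofReal_add h1 (by linarith)]
  congr 1
  ring

lemma measure_ac (h : NiceFn F) : h.stf.measure ≪ volume := by
  apply Measure.absolutelyContinuous_of_le
  rw [← h.measure_add_co]
  exact Measure.le_add_right le_rfl

lemma ae_hasDeriv (h : NiceFn F) :
    ∀ᵐ t : ℝ, t ∈ Ioo (0:ℝ) 1 →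
      HasDerivAt F ((h.stf.measure.rnDeriv volume t).toReal) t := by
  filter_upwards [h.stf.ae_hasDerivAt] with t ht hmem
  apply ht.congr_of_eventuallyEq
  filter_upwards [Ioo_mem_nhds hmem.1 hmem.2] with s hs
  rw [stf_apply, clamp_of_mem (Ioo_subset_Icc_self hs)]

lemma ae_deriv_eq (h : NiceFn F) :
    ∀ᵐ t : ℝ, t ∈ Ioo (0:ℝ) 1 →
      deriv F t = (h.stf.measure.rnDeriv volume t).toReal ∧ DifferentiableAt ℝ F t := by
  filter_upwards [h.ae_hasDeriv] with t ht hmem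
  exact ⟨(ht hmem).deriv, (ht hmem).differentiableAt⟩

lemma ftc (h : NiceFn F) {x : ℝ} (hx : x ∈ Icc (0:ℝ) 1) :
    ∫ t in Ioc (0:ℝ) x, deriv F t = F x - F 0 := by
  haveI := h.finite
  have h1 : ∀ᵐ t : ℝ, t ≠ x := by
    rw [ae_iff]
    simp only [ne_eq, not_not, Set.setOf_eq_eq_singleton]
    exact measure_singleton x
  have heq : ∫ t in Ioc (0:ℝ) x, deriv F t =
      ∫ t in Ioc (0:ℝ) x, (h.stf.measure.rnDeriv volume t).toReal := by
    apply setIntegral_congr_ae measurableSet_Ioc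
    filter_upwards [h.ae_deriv_eq, h1] with t ht htx hmem
    have ht1 : t < 1 := by
      rcases eq_or_lt_of_le (hmem.2.trans hx.2) with he | hl
      · exact absurd (by linarith [hmem.2, hx.2] : t = x) htx
      · exact hl
    exact (ht ⟨hmem.1, ht1⟩).1
  rw [heq, Measure.setIntegral_toReal_rnDeriv h.measure_ac, measureReal_def, h.stf_measure_Ioc,
    clamp_of_mem hx, clamp_of_mem (by norm_num : (0:ℝ) ∈ Icc (0:ℝ) 1),
    ENNReal.toReal_ofReal]
  exact sub_nonneg.2 (h.mono (by norm_num) hx hx.1)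

lemma deriv_mem (h : NiceFn F) {t : ℝ} (ht : t ∈ Ioo (0:ℝ) 1) :
    deriv F t ∈ Icc (0:ℝ) 1 := by
  by_cases hd : DifferentiableAt ℝ F t
  · have hder := hd.hasDerivAt
    rw [hasDerivAt_iff_tendsto_slope] at hder
    have hder' : Tendsto (slope F t) (nhdsWithin t (Ioi t)) (nhds (deriv F t)) :=
      hder.mono_left (nhdsWithin_mono t (fun y hy => ne_of_gt hy))
    apply IsClosed.mem_of_tendsto isClosed_Icc hder'
    filter_upwards [Ioo_mem_nhdsGT_of_mem ⟨le_refl t, ht.2⟩] with y hy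
    rw [slope_def_field]
    have h0y : y ∈ Icc (0:ℝ) 1 := ⟨(ht.1.trans hy.1).le, hy.2.le⟩
    have h0t : t ∈ Icc (0:ℝ) 1 := Ioo_subset_Icc_self ht
    have hty : 0 < y - t := by linarith [hy.1]
    constructor
    · exact div_nonneg (sub_nonneg.2 (h.mono h0t h0y hy.1.le)) hty.le
    · rw [div_le_one hty]
      exact h.lip h0t h0y hy.1.le
  · rw [deriv_zero_of_not_differentiableAt hd]; norm_num

lemma integrableOn_deriv (h : NiceFn F) : IntegrableOn (deriv F) (Ioc (0:ℝ) 1) volume := by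
  have heq : (Ioc (0:ℝ) 1 : Set ℝ) =ᵐ[volume] Ioo (0:ℝ) 1 := (Ioo_ae_eq_Ioc (α := ℝ)).symm
  rw [IntegrableOn, Measure.restrict_congr_set heq]
  apply Integrable.mono' (integrable_const (1:ℝ))
    (measurable_deriv F).aestronglyMeasurable
  filter_upwards [ae_restrict_mem measurableSet_Ioo] with t ht
  have hb := h.deriv_mem ht
  rw [Real.norm_eq_abs, abs_le]
  exact ⟨by linarith [hb.1], hb.2⟩

end NiceFn
/-- Right-derivative-like quantity: infimum of forward slopes into `(t,1)`. -/
noncomputable def rightD (F : ℝ → ℝ) (t : ℝ) : ℝ :=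
  sInf ((fun y => (F y - F t) / (y - t)) '' Ioo t 1)

/-- Monotone representative of the derivative on `(0,1)`, extended by constants. -/
noncomputable def mrep (F : ℝ → ℝ) (t : ℝ) : ℝ :=
  if t ≤ 0 then 0 else if t < 1 then rightD F t else 1

section rep
variable {F : ℝ → ℝ}

lemma slope_mem (h : NiceFn F) {t y : ℝ} (ht : t ∈ Icc (0:ℝ) 1) (hy : y ∈ Icc (0:ℝ) 1)
    (hty : t < y) : (F y - F t) / (y - t) ∈ Icc (0:ℝ) 1 := by
  have hty' : 0 < y - t := by linarith
  constructor
  · exact div_nonneg (sub_nonneg.2 (h.mono ht hy hty.le)) hty'.le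
  · rw [div_le_one hty']
    exact h.lip ht hy hty.le

lemma rightD_mem (h : NiceFn F) {t : ℝ} (ht : t ∈ Ioo (0:ℝ) 1) :
    rightD F t ∈ Icc (0:ℝ) 1 := by
  have hne : ((fun y => (F y - F t) / (y - t)) '' Ioo t 1).Nonempty :=
    (nonempty_Ioo.2 ht.2).image _
  have hb : ∀ z ∈ (fun y => (F y - F t) / (y - t)) '' Ioo t 1, z ∈ Icc (0:ℝ) 1 := by
    rintro z ⟨y, hy, rfl⟩
    exact slope_mem h (Ioo_subset_Icc_self ht) ⟨(ht.1.trans hy.1).le, hy.2.le⟩ hy.1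
  constructor
  · exact le_csInf hne (fun z hz => (hb z hz).1)
  · obtain ⟨z, hz⟩ := hne
    exact csInf_le_of_le ⟨0, fun w hw => (hb w hw).1⟩ hz (hb z hz).2

lemma rightD_le_slope (h : NiceFn F) {t y : ℝ} (ht : t ∈ Ioo (0:ℝ) 1)
    (hy : y ∈ Ioo t 1) : rightD F t ≤ (F y - F t) / (y - t) :=
  csInf_le ⟨0, by
    rintro w ⟨z, hz, rfl⟩
    exact (slope_mem h (Ioo_subset_Icc_self ht) ⟨(ht.1.trans hz.1).le, hz.2.le⟩ hz.1).1⟩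
    (mem_image_of_mem _ hy)

lemma rightD_mono (h : NiceFn F) (hcx : ConvexOn ℝ (Icc (0:ℝ) 1) F)
    {t₁ t₂ : ℝ} (ht₁ : t₁ ∈ Ioo (0:ℝ) 1) (ht₂ : t₂ ∈ Ioo (0:ℝ) 1) (h12 : t₁ < t₂) :
    rightD F t₁ ≤ rightD F t₂ := by
  have hne : ((fun y => (F y - F t₂) / (y - t₂)) '' Ioo t₂ 1).Nonempty :=
    (nonempty_Ioo.2 ht₂.2).image _
  apply le_csInf hne
  rintro z ⟨y, hy, rfl⟩
  calc rightD F t₁ ≤ (F t₂ - F t₁) / (t₂ - t₁) :=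
        rightD_le_slope h ht₁ ⟨h12, ht₂.2⟩
    _ ≤ (F y - F t₂) / (y - t₂) :=
        hcx.slope_mono_adjacent (Ioo_subset_Icc_self ht₁)
          ⟨(ht₂.1.trans hy.1).le, hy.2.le⟩ h12 hy.1

lemma deriv_eq_rightD (h : NiceFn F) (hcx : ConvexOn ℝ (Icc (0:ℝ) 1) F)
    {t : ℝ} (ht : t ∈ Ioo (0:ℝ) 1) (hd : DifferentiableAt ℝ F t) :
    deriv F t = rightD F t := by
  have hder := hd.hasDerivAt
  rw [hasDerivAt_iff_tendsto_slope] at hder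
  have hder' : Tendsto (slope F t) (nhdsWithin t (Ioi t)) (nhds (deriv F t)) :=
    hder.mono_left (nhdsWithin_mono t (fun y hy => ne_of_gt hy))
  have ht' : t ∈ Icc (0:ℝ) 1 := Ioo_subset_Icc_self ht
  apply le_antisymm
  · -- deriv ≤ each slope, hence ≤ sInf
    have hne : ((fun y => (F y - F t) / (y - t)) '' Ioo t 1).Nonempty :=
      (nonempty_Ioo.2 ht.2).image _
    apply le_csInf hne
    rintro z ⟨y, hy, rfl⟩
    apply le_of_tendsto hder'
    filter_upwards [Ioo_mem_nhdsGT_of_mem ⟨le_refl t, hy.1⟩] with y' hy'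
    rw [slope_def_field]
    exact hcx.secant_mono_aux2 ht' ⟨(ht.1.trans hy.1).le, hy.2.le⟩ hy'.1 hy'.2
  · -- sInf ≤ deriv
    apply ge_of_tendsto hder'
    filter_upwards [Ioo_mem_nhdsGT_of_mem ⟨le_refl t, ht.2⟩] with y hy
    rw [slope_def_field]
    exact rightD_le_slope h ht hy

lemma mrep_mono (h : NiceFn F) (hcx : ConvexOn ℝ (Icc (0:ℝ) 1) F) :
    Monotone (mrep F) := by
  intro x y hxy
  unfold mrep
  rcases le_or_gt x 0 with hx0 | hx0
  · rw [if_pos hx0]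
    split_ifs with h1 h2
    · exact le_refl _
    · exact (rightD_mem h ⟨lt_of_not_ge h1, h2⟩).1
    · exact zero_le_one
  · rw [if_neg (by linarith : ¬ y ≤ 0), if_neg (by linarith : ¬ x ≤ 0)]
    rcases lt_or_ge y 1 with hy1 | hy1
    · rw [if_pos hy1, if_pos (lt_of_le_of_lt hxy hy1)]
      rcases eq_or_lt_of_le hxy with rfl | hlt
      · exact le_refl _
      · exact rightD_mono h hcx ⟨hx0, lt_of_le_of_lt hxy hy1⟩ ⟨hx0.trans hlt, hy1⟩ hlt
    · rw [if_neg (not_lt.2 hy1)]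
      split_ifs with h1
      · exact (rightD_mem h ⟨hx0, h1⟩).2
      · exact le_refl _

lemma mrep_mem (h : NiceFn F) (t : ℝ) : mrep F t ∈ Icc (0:ℝ) 1 := by
  unfold mrep
  split_ifs with h1 h2
  · norm_num
  · exact rightD_mem h ⟨lt_of_not_ge h1, h2⟩
  · norm_num

lemma deriv_eq_mrep (h : NiceFn F) (hcx : ConvexOn ℝ (Icc (0:ℝ) 1) F)
    {t : ℝ} (ht : t ∈ Ioo (0:ℝ) 1) (hd : DifferentiableAt ℝ F t) :
    deriv F t = mrep F t := by
  unfold mrep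
  rw [if_neg (not_le.2 ht.1), if_pos ht.2]
  exact deriv_eq_rightD h hcx ht hd

end rep

variable {C : ℝ → ℝ → ℝ}

lemma mem01_0 : (0:ℝ) ∈ Icc (0:ℝ) 1 := by norm_num
lemma mem01_1 : (1:ℝ) ∈ Icc (0:ℝ) 1 := by norm_num

lemma nice2 (hC : IsCopula C) {u : ℝ} (hu : u ∈ Icc (0:ℝ) 1) : NiceFn (C u) := by
  constructor
  · intro x y hx hy hxy
    have h2 := hC.2.2 0 u x y mem01_0 hu hx hy hu.1 hxy
    have e1 := (hC.2.1 x hx).1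
    have e2 := (hC.2.1 y hy).1
    linarith
  · intro x y hx hy hxy
    have h2 := hC.2.2 u 1 x y hu mem01_1 hx hy hu.2 hxy
    have e1 := (hC.2.1 x hx).2
    have e2 := (hC.2.1 y hy).2
    linarith

lemma nice1 (hC : IsCopula C) {v : ℝ} (hv : v ∈ Icc (0:ℝ) 1) : NiceFn (fun t => C t v) := by
  constructor
  · intro x y hx hy hxy
    have h2 := hC.2.2 x y 0 v hx hy mem01_0 hv hxy hv.1
    have e1 := (hC.1 x hx).1
    have e2 := (hC.1 y hy).1
    linarith
  · intro x y hx hy hxy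
    have h2 := hC.2.2 x y v 1 hx hy hv mem01_1 hxy hv.2
    have e1 := (hC.1 x hx).2
    have e2 := (hC.1 y hy).2
    linarith

lemma C_le_min (hC : IsCopula C) {u v : ℝ} (hu : u ∈ Icc (0:ℝ) 1)
    (hv : v ∈ Icc (0:ℝ) 1) : C u v ≤ min u v := by
  apply le_min
  · have := (nice2 hC hu).mono hv mem01_1 hv.2
    have e := (hC.1 u hu).2
    linarith
  · have := (nice1 hC hv).mono hu mem01_1 hu.2
    have e := (hC.2.1 v hv).2
    linarith

lemma ae_ne_pt (x : ℝ) : ∀ᵐ t : ℝ, t ≠ x := by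
  rw [ae_iff]
  simp only [ne_eq, not_not, Set.setOf_eq_eq_singleton]
  exact measure_singleton x

/-- final contradiction step -/
lemma no_flat (hC : IsCopula C) (hdiag : ∀ v ∈ Ioo (0:ℝ) 1, C v v < v)
    {τ : ℝ → ℝ}
    (hmain : ∀ u ∈ Icc (0:ℝ) 1, ∀ᵐ l ∂(volume.restrict (Ioc (0:ℝ) 1)),
      min (τ l) u - C u (τ l) = 0)
    {s t : ℝ} (hs : s ∈ Ioo (0:ℝ) 1) (ht : t ∈ Ioo (0:ℝ) 1)
    {I : Set ℝ} (hIsub : I ⊆ Ioc (0:ℝ) 1) (hIvol : volume I ≠ 0)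
    (hτI : ∀ l ∈ I, τ l ∈ Icc s t) : False := by
  set ν := volume.restrict (Ioc (0:ℝ) 1) with hν
  have hae : ∀ᵐ l ∂ν, ∀ q : ℚ, min (τ l) (clamp q) - C (clamp q) (τ l) = 0 :=
    ae_all_iff.2 fun q => hmain (clamp q) (clamp_mem q)
  -- find a point of I in the good set
  have hbad : ν {l | ¬ ∀ q : ℚ, min (τ l) (clamp q) - C (clamp q) (τ l) = 0} = 0 := hae
  obtain ⟨l, hlI, hl⟩ : ∃ l ∈ I, ∀ q : ℚ, min (τ l) (clamp q) - C (clamp q) (τ l) = 0 := by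
    by_contra hcon
    push_neg at hcon
    apply hIvol
    have hsub : I ⊆ {l | ¬ ∀ q : ℚ, min (τ l) (clamp q) - C (clamp q) (τ l) = 0} ∩
        Ioc (0:ℝ) 1 := by
      intro l hl
      refine ⟨fun hall => ?_, hIsub hl⟩
      obtain ⟨q, hq⟩ := hcon l hl
      exact hq (hall q)
    rw [hν, Measure.restrict_apply' measurableSet_Ioc] at hbad
    exact measure_mono_null hsub hbad
  set τ₀ := τ l with hτ₀
  have hτmem : τ₀ ∈ Ioo (0:ℝ) 1 :=
    ⟨lt_of_lt_of_le hs.1 (hτI l hlI).1, lt_of_le_of_lt (hτI l hlI).2 ht.2⟩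
  have hτIcc : τ₀ ∈ Icc (0:ℝ) 1 := Ioo_subset_Icc_self hτmem
  -- show C τ₀ τ₀ = τ₀
  have hup : C τ₀ τ₀ ≤ τ₀ := by
    have := C_le_min hC hτIcc hτIcc
    simpa using this
  have hlow : τ₀ ≤ C τ₀ τ₀ := by
    by_contra hcon
    push_neg at hcon
    obtain ⟨q, hq1, hq2⟩ := exists_rat_btwn (show max (C τ₀ τ₀) 0 < τ₀ by
      simp [hcon, hτmem.1])
    have hq0 : (0:ℝ) < q := lt_of_le_of_lt (le_max_right _ _) hq1
    have hqIcc : (q:ℝ) ∈ Icc (0:ℝ) 1 := ⟨hq0.le, hq2.le.trans hτmem.2.le⟩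
    have hcl : clamp q = (q:ℝ) := clamp_of_mem hqIcc
    have := hl q
    rw [hcl, min_eq_right hq2.le] at this
    -- so C q τ₀ = q
    have hmono : C (q:ℝ) τ₀ ≤ C τ₀ τ₀ := (nice1 hC hτIcc).mono hqIcc hτIcc hq2.le
    have : (q:ℝ) ≤ C τ₀ τ₀ := by linarith
    have := lt_of_le_of_lt (le_max_left (C τ₀ τ₀) 0) hq1
    linarith
  exact absurd (le_antisymm hup hlow) (ne_of_gt (by linarith [hdiag τ₀ hτmem]))


lemma nu_finite : IsFiniteMeasure (volume.restrict (Ioc (0:ℝ) 1)) := by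
  constructor
  rw [Measure.restrict_apply_univ, Real.volume_Ioc]
  exact ENNReal.ofReal_lt_top

/-- Layer-cake: if the integral against `b` vanishes and all the level-set integrals
have a constant sign, then almost every level-set integral vanishes. -/
lemma layer' {ψ b : ℝ → ℝ} (hψmeas : Measurable ψ)
    (hψbdd : ∀ t ∈ Ioo (0:ℝ) 1, |ψ t| ≤ 2)
    (hbmeas : Measurable b) (hb01 : ∀ t, b t ∈ Icc (0:ℝ) 1)
    (hzero : ∫ t in Ioc (0:ℝ) 1, ψ t * (b t) = 0)
    (hsign : (∀ l : ℝ, 0 ≤ ∫ t in Ioc (0:ℝ) 1, ψ t * (if l < b t then 1 else 0)) ∨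
             (∀ l : ℝ, (∫ t in Ioc (0:ℝ) 1, ψ t * (if l < b t then 1 else 0)) ≤ 0)) :
    ∀ᵐ l ∂(volume.restrict (Ioc (0:ℝ) 1)),
      (∫ t in Ioc (0:ℝ) 1, ψ t * (if l < b t then 1 else 0)) = 0 := by
  set ν := volume.restrict (Ioc (0:ℝ) 1) with hν
  haveI : IsFiniteMeasure ν := nu_finite
  set f : ℝ → ℝ → ℝ := fun t l => ψ t * (if l < b t then 1 else 0) with hfdef
  have hfmeas : Measurable (Function.uncurry f) := by
    apply Measurable.mul
    · exact hψmeas.comp measurable_fst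
    · exact Measurable.ite (measurableSet_lt measurable_snd (hbmeas.comp measurable_fst))
        measurable_const measurable_const
  have hae1 : ∀ᵐ p : ℝ × ℝ ∂(ν.prod ν), p.1 ∈ Ioo (0:ℝ) 1 := by
    rw [ae_iff]
    have hseteq : {p : ℝ × ℝ | ¬ p.1 ∈ Ioo (0:ℝ) 1} = (Ioo (0:ℝ) 1)ᶜ ×ˢ (univ : Set ℝ) := by
      ext p; simp [Set.mem_prod]
    rw [hseteq, Measure.prod_prod]
    have h1 : ν (Ioo (0:ℝ) 1)ᶜ = 0 := by
      rw [hν, Measure.restrict_apply' measurableSet_Ioc]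
      have : (Ioo (0:ℝ) 1)ᶜ ∩ Ioc (0:ℝ) 1 = {1} := by
        ext r
        simp only [mem_inter_iff, mem_compl_iff, mem_Ioo, mem_Ioc, mem_singleton_iff, not_and,
          not_lt]
        constructor
        · rintro ⟨h1, h2, h3⟩; linarith [h1 h2]
        · rintro rfl; exact ⟨fun _ => le_refl 1, by norm_num⟩
      rw [this]
      exact measure_singleton 1
    rw [h1, zero_mul]
  have hfint : Integrable (Function.uncurry f) (ν.prod ν) := by
    apply Integrable.mono' (integrable_const (2:ℝ)) hfmeas.aestronglyMeasurable
    filter_upwards [hae1] with p hp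
    rw [Function.uncurry, hfdef]
    simp only []
    rw [Real.norm_eq_abs, abs_mul]
    calc |ψ p.1| * |if p.2 < b p.1 then (1:ℝ) else 0| ≤ 2 * 1 := by
          apply mul_le_mul (hψbdd p.1 hp) _ (abs_nonneg _) (by norm_num)
          split_ifs <;> simp
      _ = 2 := by norm_num
  have hswap := integral_integral_swap hfint
  have hinner : ∀ t : ℝ, (∫ l in Ioc (0:ℝ) 1, ψ t * (if l < b t then 1 else 0)) = ψ t * b t := by
    intro t
    rw [MeasureTheory.integral_const_mul]
    congr 1
    have hrw : (fun l : ℝ => if l < b t then (1:ℝ) else 0) =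
        (Iio (b t)).indicator (fun _ => (1:ℝ)) := by
      ext l
      simp [Set.indicator_apply, mem_Iio]
    rw [hrw, integral_indicator measurableSet_Iio]
    have hres : ν (Iio (b t)) = ENNReal.ofReal (b t) := by
      rw [hν, Measure.restrict_apply measurableSet_Iio]
      have hset2 : Iio (b t) ∩ Ioc (0:ℝ) 1 = Ioo 0 (b t) := by
        ext l
        simp only [mem_inter_iff, mem_Iio, mem_Ioc, mem_Ioo]
        constructor
        · rintro ⟨h1, h2, h3⟩; exact ⟨h2, h1⟩
        · rintro ⟨h1, h2⟩; exact ⟨h2, h1, (le_of_lt h2).trans (hb01 t).2⟩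
      rw [hset2, Real.volume_Ioo, sub_zero]
    rw [setIntegral_const, measureReal_def, hres, smul_eq_mul, mul_one, ENNReal.toReal_ofReal (hb01 t).1]
  have htot : (∫ l in Ioc (0:ℝ) 1, ∫ t in Ioc (0:ℝ) 1, ψ t * (if l < b t then 1 else 0)) = 0 := by
    have : (∫ t in Ioc (0:ℝ) 1, ∫ l in Ioc (0:ℝ) 1, ψ t * (if l < b t then 1 else 0)) =
        ∫ t in Ioc (0:ℝ) 1, ψ t * b t := by
      apply integral_congr_ae
      exact Filter.Eventually.of_forall hinner
    rw [← hswap, this, hzero]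
  have hGint : Integrable (fun l => ∫ t in Ioc (0:ℝ) 1, ψ t * (if l < b t then 1 else 0)) ν :=
    hfint.integral_prod_right
  rcases hsign with hpos | hneg
  · have := (integral_eq_zero_iff_of_nonneg hpos hGint).1 htot
    filter_upwards [this] with l hl
    exact hl
  · have hneg' : 0 ≤ fun l => - ∫ t in Ioc (0:ℝ) 1, ψ t * (if l < b t then 1 else 0) := by
      intro l
      simp only [Pi.zero_apply, neg_nonneg]
      exact hneg l
    have htot' : (∫ l in Ioc (0:ℝ) 1,
        - ∫ t in Ioc (0:ℝ) 1, ψ t * (if l < b t then 1 else 0)) = 0 := by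
      rw [integral_neg, htot, neg_zero]
    have := (integral_eq_zero_iff_of_nonneg hneg' hGint.neg).1 htot'
    filter_upwards [this] with l hl
    simpa using hl


lemma core (hC : IsCopula C) (hdiag : ∀ w ∈ Ioo (0:ℝ) 1, C w w < w)
    (hidem : ∀ u ∈ Icc (0:ℝ) 1, ∀ w ∈ Icc (0:ℝ) 1, MarkovProduct C C u w = C u w)
    {v : ℝ} (hv : v ∈ Icc (0:ℝ) 1) (b : ℝ → ℝ)
    (hbm : Monotone b ∨ Antitone b)
    (hb01 : ∀ t, b t ∈ Icc (0:ℝ) 1)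
    (hbae : ∀ᵐ t : ℝ, t ∈ Ioo (0:ℝ) 1 → deriv (fun s => C s v) t = b t) :
    ∀ u ∈ Icc (0:ℝ) 1, C u v = u * v := by
  haveI : IsFiniteMeasure (volume.restrict (Ioc (0:ℝ) 1)) := nu_finite
  have hbmeas : Measurable b := hbm.elim Monotone.measurable Antitone.measurable
  have n1 : NiceFn (fun t => C t v) := nice1 hC hv
  -- (A) the integral of b over (0, u] is C u v
  have hbint : ∀ u ∈ Icc (0:ℝ) 1, ∫ t in Ioc (0:ℝ) u, b t = C u v := by
    intro u hu
    have hcong : ∫ t in Ioc (0:ℝ) u, b t = ∫ t in Ioc (0:ℝ) u, deriv (fun s => C s v) t := by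
      apply setIntegral_congr_ae measurableSet_Ioc
      filter_upwards [hbae, ae_ne_pt u] with t h1 h2 hmem
      have ht1 : t < 1 := by
        rcases eq_or_lt_of_le (hmem.2.trans hu.2) with he | hl
        · exact absurd (by linarith [hmem.2, hu.2] : t = u) h2
        · exact hl
      exact (h1 ⟨hmem.1, ht1⟩).symm
    rw [hcong, n1.ftc hu]
    have e0 := (hC.2.1 v hv).1
    show C u v - C 0 v = C u v
    rw [e0, sub_zero]
  -- ψ facts
  have hψmeas : ∀ u : ℝ,
      Measurable (fun t => (Ioc (0:ℝ) u).indicator (fun _ => (1:ℝ)) t - deriv (C u) t) :=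
    fun u => (measurable_const.indicator measurableSet_Ioc).sub (measurable_deriv _)
  have hψbdd : ∀ u ∈ Icc (0:ℝ) 1, ∀ t ∈ Ioo (0:ℝ) 1,
      |(Ioc (0:ℝ) u).indicator (fun _ => (1:ℝ)) t - deriv (C u) t| ≤ 2 := by
    intro u hu t ht
    have h1 := (nice2 hC hu).deriv_mem ht
    have h2 : (Ioc (0:ℝ) u).indicator (fun _ => (1:ℝ)) t ∈ Icc (0:ℝ) 1 := by
      rw [Set.indicator_apply]; split_ifs <;> norm_num
    rw [abs_le]
    constructor
    · linarith [h2.1, h1.2]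
    · linarith [h2.2, h1.1]
  -- Φ computation
  have hΦ : ∀ u ∈ Icc (0:ℝ) 1, ∀ x ∈ Icc (0:ℝ) 1,
      ∫ t in Ioc (0:ℝ) x, ((Ioc (0:ℝ) u).indicator (fun _ => (1:ℝ)) t - deriv (C u) t) =
        min x u - C u x := by
    intro u hu x hx
    haveI : IsFiniteMeasure (volume.restrict (Ioc (0:ℝ) x)) := by
      constructor
      rw [Measure.restrict_apply_univ, Real.volume_Ioc]
      exact ENNReal.ofReal_lt_top
    have hi1 : IntegrableOn (fun t => (Ioc (0:ℝ) u).indicator (fun _ => (1:ℝ)) t)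
        (Ioc (0:ℝ) x) volume := (integrable_const (1:ℝ)).indicator measurableSet_Ioc
    have hi2 : IntegrableOn (deriv (C u)) (Ioc (0:ℝ) x) volume :=
      ((nice2 hC hu).integrableOn_deriv).mono_set (Ioc_subset_Ioc le_rfl hx.2)
    rw [integral_sub hi1 hi2]
    have e1 : ∫ t in Ioc (0:ℝ) x, (Ioc (0:ℝ) u).indicator (fun _ => (1:ℝ)) t = min x u := by
      rw [setIntegral_indicator measurableSet_Ioc, Ioc_inter_Ioc, setIntegral_const]
      rw [smul_eq_mul, mul_one, sup_idem, measureReal_def, Real.volume_Ioc, sub_zero,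
        ENNReal.toReal_ofReal (le_min hx.1 hu.1)]
    have e2 : ∫ t in Ioc (0:ℝ) x, deriv (C u) t = C u x := by
      rw [(nice2 hC hu).ftc hx, (hC.1 u hu).1, sub_zero]
    rw [e1, e2]
  -- key identity from idempotency
  have hkey : ∀ u ∈ Icc (0:ℝ) 1,
      ∫ t in Ioc (0:ℝ) 1,
        ((Ioc (0:ℝ) u).indicator (fun _ => (1:ℝ)) t - deriv (C u) t) * b t = 0 := by
    intro u hu
    have hsplit : ∀ t : ℝ, ((Ioc (0:ℝ) u).indicator (fun _ => (1:ℝ)) t - deriv (C u) t) * b t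
        = (Ioc (0:ℝ) u).indicator b t - deriv (C u) t * b t := by
      intro t
      by_cases h : t ∈ Ioc (0:ℝ) u <;>
        simp [Set.indicator_of_mem, Set.indicator_of_notMem, h] <;> ring
    simp_rw [hsplit]
    have hbIntOn : Integrable b (volume.restrict (Ioc (0:ℝ) 1)) := by
      apply Integrable.mono' (integrable_const (1:ℝ)) hbmeas.aestronglyMeasurable
      apply Filter.Eventually.of_forall
      intro t
      rw [Real.norm_eq_abs, abs_le]
      exact ⟨by linarith [(hb01 t).1], (hb01 t).2⟩
    have hi1 : IntegrableOn ((Ioc (0:ℝ) u).indicator b) (Ioc (0:ℝ) 1) volume :=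
      hbIntOn.indicator measurableSet_Ioc
    have hi2 : IntegrableOn (fun t => deriv (C u) t * b t) (Ioc (0:ℝ) 1) volume := by
      have := Integrable.bdd_mul ((nice2 hC hu).integrableOn_deriv)
        hbmeas.aestronglyMeasurable
        (c := 1) (Filter.Eventually.of_forall fun t => by
          rw [Real.norm_eq_abs, abs_le]
          exact ⟨by linarith [(hb01 t).1], (hb01 t).2⟩)
      exact this.congr (Filter.Eventually.of_forall fun t => mul_comm _ _)
    rw [integral_sub hi1 hi2]
    have e1 : ∫ t in Ioc (0:ℝ) 1, (Ioc (0:ℝ) u).indicator b t = C u v := by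
      rw [setIntegral_indicator measurableSet_Ioc, Ioc_inter_Ioc, sup_idem,
        min_eq_right hu.2]
      exact hbint u hu
    have e2 : ∫ t in Ioc (0:ℝ) 1, deriv (C u) t * b t = C u v := by
      have h0 := hidem u hu v hv
      unfold MarkovProduct at h0
      rw [intervalIntegral.integral_of_le zero_le_one] at h0
      rw [← h0]
      apply setIntegral_congr_ae measurableSet_Ioc
      filter_upwards [hbae, ae_ne_pt 1] with t h1 h2 hmem
      have htIoo : t ∈ Ioo (0:ℝ) 1 := ⟨hmem.1, lt_of_le_of_ne hmem.2 h2⟩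
      rw [h1 htIoo]
    rw [e1, e2, sub_self]
  -- b is constant on (0,1)
  have hbc : ∀ s ∈ Ioo (0:ℝ) 1, ∀ t ∈ Ioo (0:ℝ) 1, s < t → b s = b t := by
    intro s hs t ht hst
    rcases hbm with hmono | hanti
    · -- monotone case
      by_contra hne
      have hlt : b s < b t := lt_of_le_of_ne (hmono hst.le) hne
      set S : ℝ → Set ℝ := fun l => {r | r ∈ Ioo (0:ℝ) 1 ∧ l < b r} with hS
      set τ : ℝ → ℝ := fun l => sInf (insert (1:ℝ) (S l)) with hτdef
      have hbddS : ∀ l, BddBelow (insert (1:ℝ) (S l)) := by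
        intro l
        refine ⟨0, ?_⟩
        rintro r (rfl | hr)
        · norm_num
        · exact hr.1.1.le
      have hneS : ∀ l, (insert (1:ℝ) (S l)).Nonempty := fun l => ⟨1, mem_insert _ _⟩
      have hτmem : ∀ l, τ l ∈ Icc (0:ℝ) 1 := by
        intro l
        constructor
        · apply le_csInf (hneS l)
          rintro r (rfl | hr)
          · norm_num
          · exact hr.1.1.le
        · exact csInf_le (hbddS l) (mem_insert _ _)
      have hAae : ∀ l : ℝ, (Ioc (0:ℝ) 1 ∩ {r | l < b r} : Set ℝ) =ᵐ[volume]
          Ioc (τ l) 1 := by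
        intro l
        rw [MeasureTheory.ae_eq_set]
        constructor
        · apply measure_mono_null _ (measure_singleton (τ l))
          rintro r ⟨⟨hr1, hrb⟩, hr2⟩
          simp only [mem_singleton_iff]
          rcases eq_or_lt_of_le hr1.2 with h1 | h1
          · rcases eq_or_lt_of_le (hτmem l).2 with hτ1 | hτ1
            · rw [h1, hτ1]
            · exact absurd ⟨by rw [h1]; exact hτ1, hr1.2⟩ hr2
          · have hrS : r ∈ S l := ⟨⟨hr1.1, h1⟩, hrb⟩
            have hle : τ l ≤ r := csInf_le (hbddS l) (mem_insert_of_mem _ hrS)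
            rcases eq_or_lt_of_le hle with h2 | h2
            · exact h2.symm
            · exact absurd ⟨h2, hr1.2⟩ hr2
        · apply measure_mono_null _ (measure_singleton (1:ℝ))
          rintro r ⟨hr1, hr2⟩
          simp only [mem_singleton_iff]
          by_contra hne1
          have hrIoo : r ∈ Ioo (0:ℝ) 1 :=
            ⟨lt_of_le_of_lt (hτmem l).1 hr1.1, lt_of_le_of_ne hr1.2 hne1⟩
          obtain ⟨w, hw, hwr⟩ := exists_lt_of_csInf_lt (hneS l) hr1.1
          rcases hw with rfl | hwS
          · linarith [hrIoo.2]
          · have : b w ≤ b r := hmono hwr.le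
            exact hr2 ⟨⟨hrIoo.1, hrIoo.2.le⟩, lt_of_lt_of_le hwS.2 this⟩
      have hmain : ∀ u ∈ Icc (0:ℝ) 1, ∀ᵐ l ∂(volume.restrict (Ioc (0:ℝ) 1)),
          min (τ l) u - C u (τ l) = 0 := by
        intro u hu
        have hgval : ∀ l : ℝ, (∫ r in Ioc (0:ℝ) 1,
            ((Ioc (0:ℝ) u).indicator (fun _ => (1:ℝ)) r - deriv (C u) r) *
              (if l < b r then 1 else 0))
            = -(min (τ l) u - C u (τ l)) := by
          intro l
          have hrw : ∀ r : ℝ, ((Ioc (0:ℝ) u).indicator (fun _ => (1:ℝ)) r - deriv (C u) r) *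
              (if l < b r then 1 else 0) =
              ({r : ℝ | l < b r}).indicator
                (fun r => (Ioc (0:ℝ) u).indicator (fun _ => (1:ℝ)) r - deriv (C u) r) r := by
            intro r
            by_cases h : l < b r
            · rw [Set.indicator_of_mem (show r ∈ {r : ℝ | l < b r} from h), if_pos h, mul_one]
            · rw [Set.indicator_of_notMem (show r ∉ {r : ℝ | l < b r} from h), if_neg h,
                mul_zero]
          simp_rw [hrw]
          have hms : MeasurableSet {r : ℝ | l < b r} := hbmeas measurableSet_Ioi
          rw [setIntegral_indicator hms]
          rw [setIntegral_congr_set (hAae l)]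
          have hsplit2 : ∫ r in Ioc (0:ℝ) 1,
              ((Ioc (0:ℝ) u).indicator (fun _ => (1:ℝ)) r - deriv (C u) r) =
              (∫ r in Ioc (0:ℝ) (τ l),
                ((Ioc (0:ℝ) u).indicator (fun _ => (1:ℝ)) r - deriv (C u) r)) +
              ∫ r in Ioc (τ l) 1,
                ((Ioc (0:ℝ) u).indicator (fun _ => (1:ℝ)) r - deriv (C u) r) := by
            have hint1 : IntegrableOn
                (fun r => (Ioc (0:ℝ) u).indicator (fun _ => (1:ℝ)) r - deriv (C u) r)
                (Ioc (0:ℝ) (τ l)) volume := by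
              haveI : IsFiniteMeasure (volume.restrict (Ioc (0:ℝ) (τ l))) := by
                constructor
                rw [Measure.restrict_apply_univ, Real.volume_Ioc]
                exact ENNReal.ofReal_lt_top
              exact Integrable.sub ((integrable_const (1:ℝ)).indicator measurableSet_Ioc)
                (((nice2 hC hu).integrableOn_deriv).mono_set
                  (Ioc_subset_Ioc le_rfl (hτmem l).2))
            have hint2 : IntegrableOn
                (fun r => (Ioc (0:ℝ) u).indicator (fun _ => (1:ℝ)) r - deriv (C u) r)
                (Ioc (τ l) 1) volume := by
              haveI : IsFiniteMeasure (volume.restrict (Ioc (τ l) 1)) := by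
                constructor
                rw [Measure.restrict_apply_univ, Real.volume_Ioc]
                exact ENNReal.ofReal_lt_top
              exact Integrable.sub ((integrable_const (1:ℝ)).indicator measurableSet_Ioc)
                (((nice2 hC hu).integrableOn_deriv).mono_set
                  (Ioc_subset_Ioc (hτmem l).1 le_rfl))
            rw [← Ioc_union_Ioc_eq_Ioc (hτmem l).1 (hτmem l).2,
              setIntegral_union (Ioc_disjoint_Ioc_of_le le_rfl) measurableSet_Ioc hint1 hint2]
          have h01 : ∫ r in Ioc (0:ℝ) 1,
              ((Ioc (0:ℝ) u).indicator (fun _ => (1:ℝ)) r - deriv (C u) r) = 0 := by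
            rw [hΦ u hu 1 mem01_1, min_eq_right hu.2, (hC.1 u hu).2, sub_self]
          have hΦτ := hΦ u hu (τ l) (hτmem l)
          linarith [hsplit2, h01, hΦτ]
        have hsign : ∀ l : ℝ, (∫ r in Ioc (0:ℝ) 1,
            ((Ioc (0:ℝ) u).indicator (fun _ => (1:ℝ)) r - deriv (C u) r) *
              (if l < b r then 1 else 0)) ≤ 0 := by
          intro l
          rw [hgval l]
          have := C_le_min hC hu (hτmem l)
          rw [min_comm] at this
          linarith
        have hlayer := layer' (hψmeas u) (hψbdd u hu) hbmeas hb01 (hkey u hu)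
          (Or.inr hsign)
        filter_upwards [hlayer] with l hl
        have := hgval l
        rw [hl] at this
        linarith
      have hτI : ∀ l ∈ Ioo (b s) (b t), τ l ∈ Icc s t := by
        intro l hl
        constructor
        · apply le_csInf (hneS l)
          rintro r (rfl | hrS)
          · exact hs.2.le
          · by_contra hgt
            push_neg at hgt
            have : b r ≤ b s := hmono hgt.le
            linarith [hrS.2, hl.1]
        · exact csInf_le (hbddS l) (mem_insert_of_mem _ ⟨ht, hl.2⟩)
      have hIsub : Ioo (b s) (b t) ⊆ Ioc (0:ℝ) 1 := fun l hl =>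
        ⟨lt_of_le_of_lt (hb01 s).1 hl.1, (hl.2.trans_le (hb01 t).2).le⟩
      have hIvol : volume (Ioo (b s) (b t)) ≠ 0 := by
        rw [Real.volume_Ioo]
        simp only [ne_eq, ENNReal.ofReal_eq_zero, not_le]
        linarith
      exact no_flat hC hdiag hmain hs ht hIsub hIvol hτI
    · -- antitone case
      by_contra hne
      have hlt : b t < b s := lt_of_le_of_ne (hanti hst.le) (Ne.symm hne)
      set S : ℝ → Set ℝ := fun l => {r | r ∈ Ioo (0:ℝ) 1 ∧ l < b r} with hS
      set τ : ℝ → ℝ := fun l => sSup (insert (0:ℝ) (S l)) with hτdef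
      have hbddS : ∀ l, BddAbove (insert (0:ℝ) (S l)) := by
        intro l
        refine ⟨1, ?_⟩
        rintro r (rfl | hr)
        · norm_num
        · exact hr.1.2.le
      have hneS : ∀ l, (insert (0:ℝ) (S l)).Nonempty := fun l => ⟨0, mem_insert _ _⟩
      have hτmem : ∀ l, τ l ∈ Icc (0:ℝ) 1 := by
        intro l
        constructor
        · exact le_csSup (hbddS l) (mem_insert _ _)
        · apply csSup_le (hneS l)
          rintro r (rfl | hr)
          · norm_num
          · exact hr.1.2.le
      have hAae : ∀ l : ℝ, (Ioc (0:ℝ) 1 ∩ {r | l < b r} : Set ℝ) =ᵐ[volume]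
          Ioc (0:ℝ) (τ l) := by
        intro l
        rw [MeasureTheory.ae_eq_set]
        constructor
        · apply measure_mono_null _ (measure_singleton (1:ℝ))
          rintro r ⟨⟨hr1, hrb⟩, hr2⟩
          simp only [mem_singleton_iff]
          by_contra hne1
          have hrIoo : r ∈ Ioo (0:ℝ) 1 := ⟨hr1.1, lt_of_le_of_ne hr1.2 hne1⟩
          have hrS : r ∈ S l := ⟨hrIoo, hrb⟩
          have : r ≤ τ l := le_csSup (hbddS l) (mem_insert_of_mem _ hrS)
          exact hr2 ⟨hr1.1, this⟩
        · apply measure_mono_null _ (measure_singleton (τ l))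
          rintro r ⟨hr1, hr2⟩
          simp only [mem_singleton_iff]
          by_contra hne1
          have hrlt : r < τ l := lt_of_le_of_ne hr1.2 hne1
          obtain ⟨w, hw, hrw⟩ := exists_lt_of_lt_csSup (hneS l) hrlt
          rcases hw with rfl | hwS
          · linarith [hr1.1]
          · have hrIoo : r ∈ Ioo (0:ℝ) 1 := ⟨hr1.1, hrw.trans hwS.1.2⟩
            have hbr : l < b r := lt_of_lt_of_le hwS.2 (hanti hrw.le)
            exact hr2 ⟨⟨hr1.1, hrIoo.2.le⟩, hbr⟩
      have hmain : ∀ u ∈ Icc (0:ℝ) 1, ∀ᵐ l ∂(volume.restrict (Ioc (0:ℝ) 1)),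
          min (τ l) u - C u (τ l) = 0 := by
        intro u hu
        have hgval : ∀ l : ℝ, (∫ r in Ioc (0:ℝ) 1,
            ((Ioc (0:ℝ) u).indicator (fun _ => (1:ℝ)) r - deriv (C u) r) *
              (if l < b r then 1 else 0))
            = min (τ l) u - C u (τ l) := by
          intro l
          have hrw : ∀ r : ℝ, ((Ioc (0:ℝ) u).indicator (fun _ => (1:ℝ)) r - deriv (C u) r) *
              (if l < b r then 1 else 0) =
              ({r : ℝ | l < b r}).indicator
                (fun r => (Ioc (0:ℝ) u).indicator (fun _ => (1:ℝ)) r - deriv (C u) r) r := by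
            intro r
            by_cases h : l < b r
            · rw [Set.indicator_of_mem (show r ∈ {r : ℝ | l < b r} from h), if_pos h, mul_one]
            · rw [Set.indicator_of_notMem (show r ∉ {r : ℝ | l < b r} from h), if_neg h,
                mul_zero]
          simp_rw [hrw]
          have hms : MeasurableSet {r : ℝ | l < b r} := hbmeas measurableSet_Ioi
          rw [setIntegral_indicator hms]
          rw [setIntegral_congr_set (hAae l)]
          exact hΦ u hu (τ l) (hτmem l)
        have hsign : ∀ l : ℝ, 0 ≤ (∫ r in Ioc (0:ℝ) 1,
            ((Ioc (0:ℝ) u).indicator (fun _ => (1:ℝ)) r - deriv (C u) r) *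
              (if l < b r then 1 else 0)) := by
          intro l
          rw [hgval l]
          have := C_le_min hC hu (hτmem l)
          rw [min_comm] at this
          linarith
        have hlayer := layer' (hψmeas u) (hψbdd u hu) hbmeas hb01 (hkey u hu)
          (Or.inl hsign)
        filter_upwards [hlayer] with l hl
        rw [← hgval l]
        exact hl
      have hτI : ∀ l ∈ Ioo (b t) (b s), τ l ∈ Icc s t := by
        intro l hl
        constructor
        · exact le_csSup (hbddS l) (mem_insert_of_mem _ ⟨hs, hl.2⟩)
        · apply csSup_le (hneS l)
          rintro r (rfl | hrS)
          · exact ht.1.le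
          · by_contra hgt
            push_neg at hgt
            have : b r ≤ b t := hanti hgt.le
            linarith [hrS.2, hl.1]
      have hIsub : Ioo (b t) (b s) ⊆ Ioc (0:ℝ) 1 := fun l hl =>
        ⟨lt_of_le_of_lt (hb01 t).1 hl.1, (hl.2.trans_le (hb01 s).2).le⟩
      have hIvol : volume (Ioo (b t) (b s)) ≠ 0 := by
        rw [Real.volume_Ioo]
        simp only [ne_eq, ENNReal.ofReal_eq_zero, not_le]
        linarith
      exact no_flat hC hdiag hmain hs ht hIsub hIvol hτI
  -- conclude : b is a.e. constant, hence C u v = u * v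
  have hhalf : (1/2 : ℝ) ∈ Ioo (0:ℝ) 1 := by norm_num
  have hconst : ∀ u ∈ Icc (0:ℝ) 1, ∫ t in Ioc (0:ℝ) u, b t = u * b (1/2) := by
    intro u hu
    have : ∫ t in Ioc (0:ℝ) u, b t = ∫ t in Ioc (0:ℝ) u, b (1/2) := by
      apply setIntegral_congr_ae measurableSet_Ioc
      filter_upwards [ae_ne_pt u] with t h2 hmem
      have ht1 : t < 1 := by
        rcases eq_or_lt_of_le (hmem.2.trans hu.2) with he | hl
        · exact absurd (by linarith [hmem.2, hu.2] : t = u) h2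
        · exact hl
      have htIoo : t ∈ Ioo (0:ℝ) 1 := ⟨hmem.1, ht1⟩
      rcases lt_trichotomy t (1/2 : ℝ) with h | h | h
      · exact hbc t htIoo (1/2) hhalf h
      · rw [h]
      · exact (hbc (1/2) hhalf t htIoo h).symm
    rw [this, setIntegral_const, smul_eq_mul, measureReal_def, Real.volume_Ioc, sub_zero,
      ENNReal.toReal_ofReal hu.1]
  have hc : b (1/2) = v := by
    have h1 := hbint 1 mem01_1
    have h2 := hconst 1 mem01_1
    have h3 := (hC.2.1 v hv).2
    rw [h1] at h2
    linarith
  intro u hu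
  rw [← hbint u hu, hconst u hu, hc]


end CopulaPiAux

open CopulaPiAux in
theorem idempotent_stochMonotone_iff_pi (C : ℝ → ℝ → ℝ) (hC : IsCopula C)
    (hdiag : ∀ v ∈ Ioo (0:ℝ) 1, C v v < v) :
    ((∀ u ∈ Icc (0:ℝ) 1, ∀ v ∈ Icc (0:ℝ) 1, MarkovProduct C C u v = C u v) ∧
        (StochIncr C ∨ StochDecr C)) ↔
      (∀ u ∈ Icc (0:ℝ) 1, ∀ v ∈ Icc (0:ℝ) 1, C u v = u * v) := by
  constructor
  · rintro ⟨hidem, hmon⟩ u hu v hv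
    rcases hmon with hSI | hSD
    · -- stochastically increasing: u ↦ C u v concave
      have n1 : NiceFn (fun t => C t v) := nice1 hC hv
      have hG : NiceFn (fun t => t - C t v) := by
        constructor
        · intro x y hx hy hxy
          have h' : C y v - C x v ≤ y - x := n1.lip hx hy hxy
          show x - C x v ≤ y - C y v
          linarith
        · intro x y hx hy hxy
          have h' : C x v ≤ C y v := n1.mono hx hy hxy
          show (y - C y v) - (x - C x v) ≤ y - x
          linarith
      have hGcx : ConvexOn ℝ (Icc (0:ℝ) 1) (fun t => t - C t v) := by
        have h1 : ConvexOn ℝ (Icc (0:ℝ) 1) (fun t : ℝ => t) :=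
          convexOn_id (convex_Icc 0 1)
        have h2 : ConcaveOn ℝ (Icc (0:ℝ) 1) (fun t => C t v) := hSI v hv
        exact h1.sub h2
      have hbm : Antitone (fun t => 1 - mrep (fun r => r - C r v) t) := by
        intro x y hxy
        have := mrep_mono hG hGcx hxy
        dsimp only
        linarith
      have hb01 : ∀ t, (fun t => 1 - mrep (fun r => r - C r v) t) t ∈ Icc (0:ℝ) 1 := by
        intro t
        have := mrep_mem hG t
        constructor
        · dsimp only; linarith [this.2]
        · dsimp only; linarith [this.1]
      have hbae : ∀ᵐ t : ℝ, t ∈ Ioo (0:ℝ) 1 →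
          deriv (fun s => C s v) t = (fun t => 1 - mrep (fun r => r - C r v) t) t := by
        filter_upwards [n1.ae_deriv_eq] with t ht hmem
        have hdiff : DifferentiableAt ℝ (fun s => C s v) t := (ht hmem).2
        have hdiffG : DifferentiableAt ℝ (fun s => s - C s v) t :=
          differentiableAt_fun_id.sub hdiff
        have hdG : deriv (fun s => s - C s v) t = 1 - deriv (fun s => C s v) t := by
          rw [deriv_fun_sub differentiableAt_fun_id hdiff, deriv_id'']
        have hrep := deriv_eq_mrep hG hGcx hmem hdiffG
        show deriv (fun s => C s v) t = 1 - mrep (fun r => r - C r v) t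
        rw [← hrep, hdG]
        ring
      exact core hC hdiag hidem hv _ (Or.inr hbm) hb01 hbae u hu
    · -- stochastically decreasing: u ↦ C u v convex
      have n1 : NiceFn (fun t => C t v) := nice1 hC hv
      have hcx : ConvexOn ℝ (Icc (0:ℝ) 1) (fun t => C t v) := hSD v hv
      have hbm : Monotone (mrep (fun t => C t v)) := mrep_mono n1 hcx
      have hb01 : ∀ t, mrep (fun t => C t v) t ∈ Icc (0:ℝ) 1 := mrep_mem n1
      have hbae : ∀ᵐ t : ℝ, t ∈ Ioo (0:ℝ) 1 →
          deriv (fun s => C s v) t = mrep (fun t => C t v) t := by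
        filter_upwards [n1.ae_deriv_eq] with t ht hmem
        exact deriv_eq_mrep n1 hcx hmem (ht hmem).2
      exact core hC hdiag hidem hv _ (Or.inl hbm) hb01 hbae u hu
  · intro hCuv
    constructor
    · intro u hu v hv
      unfold MarkovProduct
      rw [intervalIntegral.integral_of_le zero_le_one]
      have hcong : ∫ t in Ioc (0:ℝ) 1, deriv (fun s => C u s) t * deriv (fun s => C s v) t
          = ∫ _t in Ioc (0:ℝ) 1, u * v := by
        apply setIntegral_congr_ae measurableSet_Ioc
        filter_upwards [ae_ne_pt 1] with t h2 hmem
        have htIoo : t ∈ Ioo (0:ℝ) 1 := ⟨hmem.1, lt_of_le_of_ne hmem.2 h2⟩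
        have e1 : deriv (fun s => C u s) t = u := by
          have heq : (fun s => C u s) =ᶠ[nhds t] (fun s => u * s) := by
            filter_upwards [Ioo_mem_nhds htIoo.1 htIoo.2] with s hs
            exact hCuv u hu s (Ioo_subset_Icc_self hs)
          rw [heq.deriv_eq]
          have : HasDerivAt (fun s : ℝ => u * s) u t := by
            simpa using (hasDerivAt_id t).const_mul u
          exact this.deriv
        have e2 : deriv (fun s => C s v) t = v := by
          have heq : (fun s => C s v) =ᶠ[nhds t] (fun s => s * v) := by
            filter_upwards [Ioo_mem_nhds htIoo.1 htIoo.2] with s hs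
            exact hCuv s (Ioo_subset_Icc_self hs) v hv
          rw [heq.deriv_eq]
          have : HasDerivAt (fun s : ℝ => s * v) v t := by
            simpa using (hasDerivAt_id t).mul_const v
          exact this.deriv
        rw [e1, e2]
      rw [hcong, setIntegral_const, smul_eq_mul, measureReal_def, Real.volume_Ioc, sub_zero,
        ENNReal.toReal_ofReal zero_le_one, one_mul, hCuv u hu v hv]
    · left
      intro v hv
      refine ⟨convex_Icc 0 1, ?_⟩
      intro x hx y hy a c ha hc hac
      have hmem : a • x + c • y ∈ Icc (0:ℝ) 1 := (convex_Icc 0 1) hx hy ha hc hac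
      show a • C x v + c • C y v ≤ C (a • x + c • y) v
      rw [hCuv x hx v hv, hCuv y hy v hv, hCuv _ hmem v hv]
      simp only [smul_eq_mul]
      apply le_of_eq
      ring
end

section
/- If C is a 2-copula that is completely dependent (i.e. Cᵀ * C = C⁺ where Cᵀ(u,v) = C(v,u) and C⁺(u,v) = min(u,v)) and stochastically increasing in the first component, then C = C⁺. -/
open MeasureTheory Set Filter

namespace CopulaAux

/-! ### Generic auxiliary lemmas -/

/-- Easy half of the fundamental theorem of calculus for monotone continuous functions:
the integral of the derivative is at most the increment. -/
lemma ftc_deriv_le {f : ℝ → ℝ} (hf : Monotone f) (hc : Continuous f) {a b : ℝ} (hab : a ≤ b) :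
    (∫ x in a..b, deriv f x) ≤ f b - f a := by
  let S : StieltjesFunction ℝ := ⟨f, hf, fun x => hc.continuousAt.continuousWithinAt⟩
  have hae : ∀ᵐ x : ℝ, deriv f x = (Measure.rnDeriv S.measure volume x).toReal := by
    filter_upwards [S.ae_hasDerivAt] with x hx
    exact hx.deriv
  rw [intervalIntegral.integral_of_le hab]
  calc (∫ x in Ioc a b, deriv f x)
      = ∫ x in Ioc a b, (Measure.rnDeriv S.measure volume x).toReal :=
        integral_congr_ae (ae_restrict_of_ae hae)
    _ ≤ (S.measure (Ioc a b)).toReal := by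
        refine Measure.setIntegral_toReal_rnDeriv_le ?_
        rw [S.measure_Ioc]
        exact ENNReal.ofReal_ne_top
    _ = f b - f a := by
        rw [S.measure_Ioc, ENNReal.toReal_ofReal (sub_nonneg.2 (hf hab))]

lemma ae_ne (c : ℝ) : ∀ᵐ x : ℝ, x ≠ c := by
  rw [ae_iff]
  have : {x : ℝ | ¬x ≠ c} = {c} := by ext x; simp
  rw [this]
  exact measure_singleton c

lemma ae_ne_one : ∀ᵐ x : ℝ, x ≠ (1:ℝ) := ae_ne 1

/-- Interval integrability of a measurable function bounded on `Ioo 0 1`. -/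
lemma II {f : ℝ → ℝ} (hm : Measurable f) {a b M : ℝ} (h0 : 0 ≤ a) (hab : a ≤ b) (hb1 : b ≤ 1)
    (hbd : ∀ x ∈ Ioo (0:ℝ) 1, |f x| ≤ M) : IntervalIntegrable f volume a b := by
  rw [intervalIntegrable_iff_integrableOn_Ioc_of_le hab]
  refine Measure.integrableOn_of_bounded (M := M) measure_Ioc_lt_top.ne
    hm.aestronglyMeasurable ?_
  filter_upwards [ae_restrict_mem measurableSet_Ioc, ae_restrict_of_ae ae_ne_one] with x hx hne
  have hx' : x ∈ Ioo (0:ℝ) 1 := ⟨lt_of_le_of_lt h0 hx.1, lt_of_le_of_ne (hx.2.trans hb1) hne⟩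
  rw [Real.norm_eq_abs]
  exact hbd x hx'

/-! ### Copula facts -/

variable {C : ℝ → ℝ → ℝ}

lemma mono1 (hC : IsCopula C) {w : ℝ} (hw : w ∈ Icc (0:ℝ) 1) :
    MonotoneOn (fun s => C s w) (Icc (0:ℝ) 1) := by
  intro a ha b hb hab
  have h := hC.2.2 a b 0 w ha hb (left_mem_Icc.2 zero_le_one) hw hab hw.1
  have ha0 := (hC.1 a ha).1
  have hb0 := (hC.1 b hb).1
  simp only
  linarith

lemma lip1 (hC : IsCopula C) {w : ℝ} (hw : w ∈ Icc (0:ℝ) 1) {a b : ℝ}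
    (ha : a ∈ Icc (0:ℝ) 1) (hb : b ∈ Icc (0:ℝ) 1) (hab : a ≤ b) :
    C b w - C a w ≤ b - a := by
  have h := hC.2.2 a b w 1 ha hb hw (right_mem_Icc.2 zero_le_one) hab hw.2
  have ha1 := (hC.1 a ha).2
  have hb1 := (hC.1 b hb).2
  linarith

lemma cop_nonneg (hC : IsCopula C) {u v : ℝ} (hu : u ∈ Icc (0:ℝ) 1) (hv : v ∈ Icc (0:ℝ) 1) :
    0 ≤ C u v := by
  have h := mono1 hC hv (left_mem_Icc.2 zero_le_one) hu hu.1
  have h0 := (hC.2.1 v hv).1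
  simp only at h
  linarith

lemma cop_le_min (hC : IsCopula C) {u v : ℝ} (hu : u ∈ Icc (0:ℝ) 1) (hv : v ∈ Icc (0:ℝ) 1) :
    C u v ≤ min u v := by
  have h01 : (0:ℝ) ∈ Icc (0:ℝ) 1 := left_mem_Icc.2 zero_le_one
  have h11 : (1:ℝ) ∈ Icc (0:ℝ) 1 := right_mem_Icc.2 zero_le_one
  refine le_min ?_ ?_
  · have h := hC.2.2 0 u v 1 h01 hu hv h11 hu.1 hv.2
    have h1 := (hC.1 u hu).2
    have h2 := (hC.1 0 h01).2
    have h3 := (hC.2.1 v hv).1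
    linarith
  · have h := hC.2.2 u 1 0 v hu h11 h01 hv hu.2 hv.1
    have h1 := (hC.2.1 v hv).2
    have h2 := (hC.1 1 h11).1
    have h3 := (hC.1 u hu).1
    linarith

/-! ### Clamping -/

noncomputable def cl (s : ℝ) : ℝ := max 0 (min 1 s)

lemma cl_mem (s : ℝ) : cl s ∈ Icc (0:ℝ) 1 :=
  ⟨le_max_left _ _, max_le zero_le_one (min_le_left _ _)⟩

lemma cl_of_mem {s : ℝ} (hs : s ∈ Icc (0:ℝ) 1) : cl s = s := by
  unfold cl
  rw [min_eq_right hs.2, max_eq_right hs.1]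

lemma cl_mono : Monotone cl := fun a b hab => max_le_max le_rfl (min_le_min le_rfl hab)

lemma cl_lip {a b : ℝ} (hab : a ≤ b) : cl b - cl a ≤ b - a := by
  simp only [cl, min_def, max_def]
  split_ifs <;> linarith

lemma F_mono (hC : IsCopula C) {w : ℝ} (hw : w ∈ Icc (0:ℝ) 1) :
    Monotone (fun s => C (cl s) w) :=
  fun a b hab => mono1 hC hw (cl_mem a) (cl_mem b) (cl_mono hab)

lemma F_cont (hC : IsCopula C) {w : ℝ} (hw : w ∈ Icc (0:ℝ) 1) :
    Continuous (fun s => C (cl s) w) := by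
  have hlip : LipschitzWith 1 (fun s => C (cl s) w) := by
    refine LipschitzWith.of_dist_le_mul fun a b => ?_
    rw [NNReal.coe_one, one_mul, Real.dist_eq, Real.dist_eq]
    rcases le_total a b with hab | hab
    · have h1 : C (cl a) w ≤ C (cl b) w := F_mono hC hw hab
      have h2 : C (cl b) w - C (cl a) w ≤ cl b - cl a :=
        lip1 hC hw (cl_mem a) (cl_mem b) (cl_mono hab)
      have h3 := cl_lip hab
      rw [abs_sub_comm, abs_of_nonneg (sub_nonneg.2 h1), abs_sub_comm a b,
        abs_of_nonneg (sub_nonneg.2 hab)]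
      linarith
    · have h1 : C (cl b) w ≤ C (cl a) w := F_mono hC hw hab
      have h2 : C (cl a) w - C (cl b) w ≤ cl a - cl b :=
        lip1 hC hw (cl_mem b) (cl_mem a) (cl_mono hab)
      have h3 := cl_lip hab
      rw [abs_of_nonneg (sub_nonneg.2 h1), abs_of_nonneg (sub_nonneg.2 hab)]
      linarith
  exact hlip.continuous

lemma deriv_eq_F (hC : IsCopula C) {w t : ℝ} (ht : t ∈ Ioo (0:ℝ) 1) :
    deriv (fun s => C s w) t = deriv (fun s => C (cl s) w) t := by
  apply Filter.EventuallyEq.deriv_eq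
  filter_upwards [isOpen_Ioo.mem_nhds ht] with s hs
  rw [cl_of_mem (Ioo_subset_Icc_self hs)]

/-- Pointwise bounds on the partial derivative of a copula which is concave in its
first variable. -/
lemma deriv_bounds (hC : IsCopula C) {w : ℝ} (hw : w ∈ Icc (0:ℝ) 1)
    (hconc : ConcaveOn ℝ (Icc (0:ℝ) 1) (fun s => C s w)) {t : ℝ} (ht : t ∈ Ioo (0:ℝ) 1) :
    deriv (fun s => C s w) t ∈ Icc (0:ℝ) 1 := by
  by_cases hd : DifferentiableAt ℝ (fun s => C s w) t
  · have htI : t ∈ Icc (0:ℝ) 1 := Ioo_subset_Icc_self ht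
    constructor
    · have h := hconc.slope_le_deriv htI (right_mem_Icc.2 zero_le_one) ht.2 hd
      simp only [slope_def_field] at h
      have h1 : C 1 w = w := (hC.2.1 w hw).2
      have h2 : C t w ≤ min t w := cop_le_min hC htI hw
      have h4 := min_le_right t w
      have h5 : (0:ℝ) ≤ (C 1 w - C t w) / (1 - t) :=
        div_nonneg (by linarith) (by linarith [ht.2])
      linarith
    · have h := hconc.deriv_le_slope (left_mem_Icc.2 zero_le_one) htI ht.1 hd
      simp only [slope_def_field] at h
      have h1 : C 0 w = 0 := (hC.2.1 w hw).1
      have h2 : C t w ≤ min t w := cop_le_min hC htI hw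
      have h4 := min_le_left t w
      have h5 : (C t w - C 0 w) / (t - 0) ≤ 1 := by
        rw [h1, sub_zero, sub_zero, div_le_one ht.1]
        linarith
      linarith
  · rw [deriv_zero_of_not_differentiableAt hd]
    exact ⟨le_rfl, zero_le_one⟩

/-! ### The key inequality: the Markov product is bounded by the copula -/

lemma markov_le (hC : IsCopula C) (hSI : StochIncr C) {u v : ℝ}
    (hu : u ∈ Icc (0:ℝ) 1) (hv : v ∈ Icc (0:ℝ) 1) (hu0 : 0 < u) (hu1 : u < 1) :
    (∫ t in (0:ℝ)..1, deriv (fun s => C s u) t * deriv (fun s => C s v) t) ≤ C u v := by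
  set dg := deriv (fun s => C s u) with hdgdef
  set dh := deriv (fun s => C s v) with hdhdef
  have hgB : ∀ t ∈ Ioo (0:ℝ) 1, dg t ∈ Icc (0:ℝ) 1 :=
    fun t ht => deriv_bounds hC hu (hSI u hu) ht
  have hhB : ∀ t ∈ Ioo (0:ℝ) 1, dh t ∈ Icc (0:ℝ) 1 :=
    fun t ht => deriv_bounds hC hv (hSI v hv) ht
  have hmg : Measurable dg := measurable_deriv _
  have hmh : Measurable dh := measurable_deriv _
  -- FTC-type inequalities
  have hFTCg : (∫ t in (0:ℝ)..1, dg t) ≤ u := by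
    have hcongr : (∫ t in (0:ℝ)..1, dg t) = ∫ t in (0:ℝ)..1, deriv (fun s => C (cl s) u) t := by
      refine intervalIntegral.integral_congr_ae ?_
      filter_upwards [ae_ne_one] with x hne hx
      rw [uIoc_of_le zero_le_one] at hx
      exact deriv_eq_F hC ⟨hx.1, lt_of_le_of_ne hx.2 hne⟩
    have h' : (∫ t in (0:ℝ)..1, deriv (fun s => C (cl s) u) t) ≤ C (cl 1) u - C (cl 0) u :=
      ftc_deriv_le (F_mono hC hu) (F_cont hC hu) zero_le_one
    have e1 : C (cl 1) u = u := by
      rw [cl_of_mem (right_mem_Icc.2 zero_le_one)]; exact (hC.2.1 u hu).2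
    have e0 : C (cl 0) u = 0 := by
      rw [cl_of_mem (left_mem_Icc.2 zero_le_one)]; exact (hC.2.1 u hu).1
    rw [hcongr]
    rw [e1, e0] at h'
    linarith
  have hFTCh : (∫ t in (0:ℝ)..u, dh t) ≤ C u v := by
    have hcongr : (∫ t in (0:ℝ)..u, dh t) = ∫ t in (0:ℝ)..u, deriv (fun s => C (cl s) v) t := by
      refine intervalIntegral.integral_congr_ae (ae_of_all _ ?_)
      intro x hx
      rw [uIoc_of_le hu0.le] at hx
      exact deriv_eq_F hC ⟨hx.1, lt_of_le_of_lt hx.2 hu1⟩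
    have h' : (∫ t in (0:ℝ)..u, deriv (fun s => C (cl s) v) t) ≤ C (cl u) v - C (cl 0) v :=
      ftc_deriv_le (F_mono hC hv) (F_cont hC hv) hu0.le
    have e1 : C (cl u) v = C u v := by rw [cl_of_mem hu]
    have e0 : C (cl 0) v = 0 := by
      rw [cl_of_mem (left_mem_Icc.2 zero_le_one)]; exact (hC.2.1 v hv).1
    rw [hcongr]
    rw [e1, e0] at h'
    linarith
  -- a.e. differentiability
  have hdiffv : ∀ᵐ t : ℝ, t ∈ Ioo (0:ℝ) 1 → DifferentiableAt ℝ (fun s => C s v) t := by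
    have hm : MonotoneOn (fun s => C s v) (Ioo (0:ℝ) 1) :=
      (mono1 hC hv).mono Ioo_subset_Icc_self
    filter_upwards [hm.ae_differentiableWithinAt_of_mem] with t ht hto
    exact (ht hto).differentiableAt (Ioo_mem_nhds hto.1 hto.2)
  -- the pivot value
  set D : Set ℝ := {t | t ∈ Ioo u 1 ∧ DifferentiableAt ℝ (fun s => C s v) t} with hDdef
  have hDsub : D ⊆ Ioo (0:ℝ) 1 := fun t ht => ⟨hu0.trans ht.1.1, ht.1.2⟩
  have hDne : D.Nonempty := by
    by_contra hne
    rw [not_nonempty_iff_eq_empty] at hne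
    have hsub : Ioo u 1 ⊆
        {t : ℝ | ¬(t ∈ Ioo (0:ℝ) 1 → DifferentiableAt ℝ (fun s => C s v) t)} := by
      intro t ht himp
      have htD : t ∈ D := ⟨ht, himp ⟨hu0.trans ht.1, ht.2⟩⟩
      rw [hne] at htD
      exact htD
    have h0 : volume (Ioo u 1) = 0 := measure_mono_null hsub (ae_iff.1 hdiffv)
    rw [Real.volume_Ioo, ENNReal.ofReal_eq_zero] at h0
    linarith
  set p := sSup (dh '' D) with hpdef
  have hbdd : BddAbove (dh '' D) := by
    refine ⟨1, ?_⟩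
    rintro y ⟨t, htD, rfl⟩
    exact (hhB t (hDsub htD)).2
  have hple : ∀ t ∈ D, dh t ≤ p := fun t ht => le_csSup hbdd ⟨t, ht, rfl⟩
  have hp0 : 0 ≤ p := by
    obtain ⟨t0, ht0⟩ := hDne
    exact le_trans (hhB t0 (hDsub ht0)).1 (hple t0 ht0)
  have hp1 : p ≤ 1 := by
    refine csSup_le (hDne.image _) ?_
    rintro y ⟨t, htD, rfl⟩
    exact (hhB t (hDsub htD)).2
  have hpge : ∀ t ∈ Ioo (0:ℝ) u, DifferentiableAt ℝ (fun s => C s v) t → p ≤ dh t := by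
    intro t ht hd
    refine csSup_le (hDne.image _) ?_
    rintro y ⟨t2, ht2, rfl⟩
    have hconc := hSI v hv
    have htI : t ∈ Icc (0:ℝ) 1 := ⟨ht.1.le, (ht.2.trans hu1).le⟩
    have ht2I : t2 ∈ Icc (0:ℝ) 1 := Ioo_subset_Icc_self (hDsub ht2)
    have hlt : t < t2 := ht.2.trans ht2.1.1
    calc dh t2 ≤ slope (fun s => C s v) t t2 := hconc.deriv_le_slope htI ht2I hlt ht2.2
    _ ≤ dh t := hconc.slope_le_deriv htI ht2I hlt hd
  -- integrability
  have habs_g : ∀ x ∈ Ioo (0:ℝ) 1, |dg x| ≤ 1 := by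
    intro x hx
    rw [abs_of_nonneg (hgB x hx).1]
    exact (hgB x hx).2
  have habs_h : ∀ x ∈ Ioo (0:ℝ) 1, |dh x| ≤ 1 := by
    intro x hx
    rw [abs_of_nonneg (hhB x hx).1]
    exact (hhB x hx).2
  have habs_gh : ∀ x ∈ Ioo (0:ℝ) 1, |dg x * dh x| ≤ 1 := by
    intro x hx
    rw [abs_mul]
    exact mul_le_one₀ (habs_g x hx) (abs_nonneg _) (habs_h x hx)
  have hIg0u : IntervalIntegrable dg volume 0 u := II hmg le_rfl hu0.le hu.2 habs_g
  have hIgu1 : IntervalIntegrable dg volume u 1 := II hmg hu0.le hu.2 le_rfl habs_g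
  have hIh0u : IntervalIntegrable dh volume 0 u := II hmh le_rfl hu0.le hu.2 habs_h
  have hIgh0u : IntervalIntegrable (fun t => dg t * dh t) volume 0 u :=
    II (hmg.mul hmh) le_rfl hu0.le hu.2 habs_gh
  have hIghu1 : IntervalIntegrable (fun t => dg t * dh t) volume u 1 :=
    II (hmg.mul hmh) hu0.le hu.2 le_rfl habs_gh
  have hIgp0u : IntervalIntegrable (fun t => dg t * p) volume 0 u := hIg0u.mul_const p
  have hIgpu1 : IntervalIntegrable (fun t => dg t * p) volume u 1 := hIgu1.mul_const p
  have hImix : IntervalIntegrable (fun t => dh t - p + dg t * p) volume 0 u :=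
    (hIh0u.sub intervalIntegrable_const).add hIgp0u
  -- two monotone comparisons
  have hstep1 : (∫ t in (0:ℝ)..u, dg t * dh t) ≤ ∫ t in (0:ℝ)..u, (dh t - p + dg t * p) := by
    refine intervalIntegral.integral_mono_ae_restrict hu0.le hIgh0u hImix ?_
    filter_upwards [ae_restrict_mem measurableSet_Icc, ae_restrict_of_ae hdiffv,
      ae_restrict_of_ae (ae_ne (0:ℝ)), ae_restrict_of_ae (ae_ne u)] with x hx hdiff hne0 hneu
    have hxI : x ∈ Ioo (0:ℝ) u := ⟨lt_of_le_of_ne hx.1 (Ne.symm hne0), lt_of_le_of_ne hx.2 hneu⟩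
    have hx01 : x ∈ Ioo (0:ℝ) 1 := ⟨hxI.1, hxI.2.trans hu1⟩
    have hg := hgB x hx01
    have hpg := hpge x hxI (hdiff hx01)
    nlinarith [mul_nonneg (sub_nonneg.2 hg.2) (sub_nonneg.2 hpg)]
  have hstep2 : (∫ t in u..(1:ℝ), dg t * dh t) ≤ ∫ t in u..(1:ℝ), dg t * p := by
    refine intervalIntegral.integral_mono_ae_restrict hu1.le hIghu1 hIgpu1 ?_
    filter_upwards [ae_restrict_mem measurableSet_Icc, ae_restrict_of_ae hdiffv,
      ae_restrict_of_ae (ae_ne u), ae_restrict_of_ae (ae_ne (1:ℝ))] with x hx hdiff hneu hne1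
    have hxI : x ∈ Ioo u 1 := ⟨lt_of_le_of_ne hx.1 (Ne.symm hneu), lt_of_le_of_ne hx.2 hne1⟩
    have hx01 : x ∈ Ioo (0:ℝ) 1 := ⟨hu0.trans hxI.1, hxI.2⟩
    have hg := hgB x hx01
    have hdhp : dh x ≤ p := hple x ⟨hxI, hdiff hx01⟩
    exact mul_le_mul_of_nonneg_left hdhp hg.1
  -- computing the comparison integrals
  have hcomp1 : (∫ t in (0:ℝ)..u, (dh t - p + dg t * p))
      = (∫ t in (0:ℝ)..u, dh t) - p * u + (∫ t in (0:ℝ)..u, dg t) * p := by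
    rw [intervalIntegral.integral_add (hIh0u.sub intervalIntegrable_const) hIgp0u,
      intervalIntegral.integral_sub hIh0u intervalIntegrable_const,
      intervalIntegral.integral_const, intervalIntegral.integral_mul_const]
    simp [smul_eq_mul]
    ring
  have hcomp2 : (∫ t in u..(1:ℝ), dg t * p) = (∫ t in u..(1:ℝ), dg t) * p :=
    intervalIntegral.integral_mul_const p dg
  -- assembling
  have hsplitgh : (∫ t in (0:ℝ)..1, dg t * dh t)
      = (∫ t in (0:ℝ)..u, dg t * dh t) + ∫ t in u..(1:ℝ), dg t * dh t :=
    (intervalIntegral.integral_add_adjacent_intervals hIgh0u hIghu1).symm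
  have hsplitg : (∫ t in (0:ℝ)..u, dg t) + (∫ t in u..(1:ℝ), dg t) = ∫ t in (0:ℝ)..1, dg t :=
    intervalIntegral.integral_add_adjacent_intervals hIg0u hIgu1
  have hmul : ((∫ t in (0:ℝ)..u, dg t) + (∫ t in u..(1:ℝ), dg t)) * p ≤ u * p := by
    refine mul_le_mul_of_nonneg_right ?_ hp0
    rw [hsplitg]
    exact hFTCg
  rw [hsplitgh]
  have := hstep1.trans_eq hcomp1
  have := hstep2.trans_eq hcomp2
  nlinarith [hmul, hFTCh]

end CopulaAux

theorem completelyDependent_stochIncr_eq_upperFrechet (C : ℝ → ℝ → ℝ) (hC : IsCopula C)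
    (hcd : ∀ u ∈ Icc (0:ℝ) 1, ∀ v ∈ Icc (0:ℝ) 1,
      MarkovProduct (fun x y => C y x) C u v = min u v)
    (hSI : StochIncr C) :
    ∀ u ∈ Icc (0:ℝ) 1, ∀ v ∈ Icc (0:ℝ) 1, C u v = min u v := by
  intro u hu v hv
  rcases eq_or_lt_of_le hu.1 with h0 | hu0
  · rw [← h0, (hC.2.1 v hv).1, min_eq_left hv.1]
  rcases eq_or_lt_of_le hu.2 with h1 | hu1
  · rw [h1, (hC.2.1 v hv).2, min_eq_right hv.2]
  refine le_antisymm (CopulaAux.cop_le_min hC hu hv) ?_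
  rw [← hcd u hu v hv]
  exact CopulaAux.markov_le hC hSI hu hv hu0 hu1
end

section
/- Every extreme value copula C(u,v) = exp( log(uv) · A(log u / log(uv)) ), where A : [0,1] → [1/2, 1] is convex with max(t, 1−t) ≤ A(t) ≤ 1 for all t, is stochastically increasing in both components; in particular u ↦ C(u,v) is concave for each fixed v ∈ (0,1]. -/
open MeasureTheory Set Filter

/-- The extreme value copula associated to a Pickands dependence function A. -/
noncomputable def EVCopula (A : ℝ → ℝ) (u v : ℝ) : ℝ :=
  if u = 0 ∨ v = 0 then 0
  else Real.exp (Real.log (u * v) * A (Real.log u / Real.log (u * v)))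

section Aux

lemma concaveOn_of_majorants {s : Set ℝ} (hs : Convex ℝ s) {f : ℝ → ℝ}
    (h : ∀ z ∈ s, ∃ g : ℝ → ℝ, ConcaveOn ℝ s g ∧ (∀ x ∈ s, f x ≤ g x) ∧ f z = g z) :
    ConcaveOn ℝ s f := by
  refine ⟨hs, fun x hx y hy a b ha hb hab => ?_⟩
  obtain ⟨g, hg, hle, heq⟩ := h _ (hs hx hy ha hb hab)
  calc a • f x + b • f y ≤ a • g x + b • g y := by
        simp only [smul_eq_mul]
        gcongr
        · exact hle x hx
        · exact hle y hy
    _ ≤ g (a • x + b • y) := hg.2 hx hy ha hb hab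
    _ = f (a • x + b • y) := heq.symm

lemma concave_mul_pow {b c : ℝ} (hb0 : 0 ≤ b) (hb1 : b ≤ 1) (hc : 0 ≤ c) :
    ConcaveOn ℝ (Icc (0:ℝ) 1) (fun v : ℝ => c * v ^ b) := by
  have h := ((Real.concaveOn_rpow hb0 hb1).subset Icc_subset_Ici_self (convex_Icc 0 1)).smul hc
  simpa [smul_eq_mul] using h

lemma concave_pow_mul {a c : ℝ} (ha0 : 0 ≤ a) (ha1 : a ≤ 1) (hc : 0 ≤ c) :
    ConcaveOn ℝ (Icc (0:ℝ) 1) (fun u : ℝ => u ^ a * c) := by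
  have h := concave_mul_pow ha0 ha1 hc
  simpa [mul_comm] using h

lemma tmem {u v : ℝ} (hu : u ∈ Ioc (0:ℝ) 1) (hv : v ∈ Ioc (0:ℝ) 1) :
    Real.log u / Real.log (u * v) ∈ Icc (0:ℝ) 1 := by
  have hL : Real.log (u * v) ≤ 0 :=
    Real.log_nonpos (mul_pos hu.1 hv.1).le (by nlinarith [hu.1, hu.2, hv.1, hv.2])
  rcases eq_or_lt_of_le hL with h0 | hneg
  · rw [h0, div_zero]; norm_num
  · have hlu : Real.log u ≤ 0 := Real.log_nonpos hu.1.le hu.2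
    have hlv : Real.log v ≤ 0 := Real.log_nonpos hv.1.le hv.2
    have hLmul : Real.log (u * v) = Real.log u + Real.log v :=
      Real.log_mul hu.1.ne' hv.1.ne'
    constructor
    · rw [div_nonneg_iff]; right; exact ⟨hlu, hneg.le⟩
    · rw [div_le_one_of_neg hneg]; linarith

lemma one_one_of_log {u v : ℝ} (hu : u ∈ Ioc (0:ℝ) 1) (hv : v ∈ Ioc (0:ℝ) 1)
    (h : Real.log (u * v) = 0) : u = 1 ∧ v = 1 := by
  have huv : u * v = 1 := Real.eq_one_of_pos_of_log_eq_zero (mul_pos hu.1 hv.1) h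
  constructor <;> nlinarith [hu.1, hu.2, hv.1, hv.2]

lemma evBound (A : ℝ → ℝ) {a b : ℝ}
    (hline : ∀ t ∈ Icc (0:ℝ) 1, a * t + b * (1 - t) ≤ A t) :
    ∀ u ∈ Icc (0:ℝ) 1, ∀ v ∈ Icc (0:ℝ) 1, EVCopula A u v ≤ u ^ a * v ^ b := by
  intro u hu v hv
  unfold EVCopula
  by_cases h : u = 0 ∨ v = 0
  · rw [if_pos h]
    have := Real.rpow_nonneg hu.1 a
    have := Real.rpow_nonneg hv.1 b
    positivity
  rw [if_neg h]
  push_neg at h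
  have hu0 : 0 < u := lt_of_le_of_ne hu.1 (Ne.symm h.1)
  have hv0 : 0 < v := lt_of_le_of_ne hv.1 (Ne.symm h.2)
  have huo : u ∈ Ioc (0:ℝ) 1 := ⟨hu0, hu.2⟩
  have hvo : v ∈ Ioc (0:ℝ) 1 := ⟨hv0, hv.2⟩
  have hrw : u ^ a * v ^ b = Real.exp (a * Real.log u + b * Real.log v) := by
    rw [Real.rpow_def_of_pos hu0, Real.rpow_def_of_pos hv0, ← Real.exp_add]
    ring_nf
  rw [hrw]
  have hL : Real.log (u * v) ≤ 0 :=
    Real.log_nonpos (by positivity) (by nlinarith [hu.2, hv.2, hu0, hv0])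
  rcases eq_or_lt_of_le hL with h0 | hneg
  · obtain ⟨hu1, hv1⟩ := one_one_of_log huo hvo h0
    simp [hu1, hv1]
  · have hLmul : Real.log (u * v) = Real.log u + Real.log v :=
      Real.log_mul hu0.ne' hv0.ne'
    set t := Real.log u / Real.log (u * v) with htdef
    have ht : t ∈ Icc (0:ℝ) 1 := tmem huo hvo
    have hkey := hline t ht
    have hLt : Real.log (u * v) * t = Real.log u := by
      rw [htdef, mul_comm]; exact div_mul_cancel₀ _ hneg.ne
    apply Real.exp_le_exp.mpr
    calc Real.log (u * v) * A t
        ≤ Real.log (u * v) * (a * t + b * (1 - t)) :=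
          mul_le_mul_of_nonpos_left hkey hneg.le
      _ = a * (Real.log (u * v) * t) + b * (Real.log (u * v) - Real.log (u * v) * t) := by ring
      _ = a * Real.log u + b * Real.log v := by rw [hLt, hLmul]; ring

lemma evTouch (A : ℝ → ℝ) {a b u v : ℝ} (hu : u ∈ Ioc (0:ℝ) 1) (hv : v ∈ Ioc (0:ℝ) 1)
    (h : a * (Real.log u / Real.log (u * v)) + b * (1 - Real.log u / Real.log (u * v)) =
      A (Real.log u / Real.log (u * v))) :
    EVCopula A u v = u ^ a * v ^ b := by
  unfold EVCopula
  rw [if_neg (by push_neg; exact ⟨hu.1.ne', hv.1.ne'⟩)]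
  have hrw : u ^ a * v ^ b = Real.exp (a * Real.log u + b * Real.log v) := by
    rw [Real.rpow_def_of_pos hu.1, Real.rpow_def_of_pos hv.1, ← Real.exp_add]
    ring_nf
  rw [hrw]
  congr 1
  by_cases hL : Real.log (u * v) = 0
  · obtain ⟨hu1, hv1⟩ := one_one_of_log hu hv hL
    simp [hu1, hv1, hL]
  · have hLmul : Real.log (u * v) = Real.log u + Real.log v :=
      Real.log_mul hu.1.ne' hv.1.ne'
    rw [← h]
    have hLt : Real.log (u * v) * (Real.log u / Real.log (u * v)) = Real.log u := by
      rw [mul_comm]; exact div_mul_cancel₀ _ hL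
    calc Real.log (u * v) * (a * (Real.log u / Real.log (u * v)) +
          b * (1 - Real.log u / Real.log (u * v)))
        = a * (Real.log (u * v) * (Real.log u / Real.log (u * v))) +
          b * (Real.log (u * v) - Real.log (u * v) * (Real.log u / Real.log (u * v))) := by ring
      _ = a * Real.log u + b * Real.log v := by rw [hLt, hLmul]; ring

lemma supporting_line (A : ℝ → ℝ) (hconv : ConvexOn ℝ (Icc (0:ℝ) 1) A)
    (hA : ∀ t ∈ Icc (0:ℝ) 1, max t (1 - t) ≤ A t ∧ A t ≤ 1) {t₀ : ℝ} (ht₀ : t₀ ∈ Icc (0:ℝ) 1) :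
    ∃ a b : ℝ, a ∈ Icc (0:ℝ) 1 ∧ b ∈ Icc (0:ℝ) 1 ∧
      (∀ t ∈ Icc (0:ℝ) 1, a * t + b * (1 - t) ≤ A t) ∧ a * t₀ + b * (1 - t₀) = A t₀ := by
  have h0mem : (0:ℝ) ∈ Icc (0:ℝ) 1 := by norm_num
  have h1mem : (1:ℝ) ∈ Icc (0:ℝ) 1 := by norm_num
  have hA0 : A 0 = 1 := le_antisymm (hA 0 h0mem).2 (le_trans (by norm_num) (hA 0 h0mem).1)
  have hA1 : A 1 = 1 := le_antisymm (hA 1 h1mem).2 (le_trans (by norm_num) (hA 1 h1mem).1)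
  rcases eq_or_lt_of_le ht₀.1 with h0 | h0
  · refine ⟨0, 1, by norm_num, by norm_num, fun t ht => ?_, by rw [← h0]; simp [hA0]⟩
    simpa using le_trans (le_max_right t (1 - t)) (hA t ht).1
  rcases eq_or_lt_of_le ht₀.2 with h1 | h1
  · refine ⟨1, 0, by norm_num, by norm_num, fun t ht => ?_, by rw [h1]; simp [hA1]⟩
    simpa using le_trans (le_max_left t (1 - t)) (hA t ht).1
  · -- interior case
    set S : Set ℝ := (fun t => (A t - A t₀) / (t - t₀)) '' (Ioc t₀ 1) with hS
    have hne : S.Nonempty := ⟨_, 1, ⟨h1, le_refl 1⟩, rfl⟩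
    have hlb : ∀ m ∈ S, (A t₀ - A 0) / (t₀ - 0) ≤ m := by
      rintro m ⟨t, ht, rfl⟩
      exact hconv.slope_mono_adjacent h0mem ⟨le_trans ht₀.1 ht.1.le, ht.2⟩ h0 ht.1
    have hbdd : BddBelow S := ⟨_, hlb⟩
    set σ := sInf S with hσ
    have hsupp : ∀ t ∈ Icc (0:ℝ) 1, A t₀ + σ * (t - t₀) ≤ A t := by
      intro t ht
      rcases lt_trichotomy t t₀ with hlt | heq | hgt
      · have hle : (A t₀ - A t) / (t₀ - t) ≤ σ := by
          apply le_csInf hne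
          rintro m ⟨t', ht', rfl⟩
          exact hconv.slope_mono_adjacent ht ⟨le_trans ht₀.1 ht'.1.le, ht'.2⟩ hlt ht'.1
        rw [div_le_iff₀ (by linarith)] at hle
        have : σ * (t - t₀) = -(σ * (t₀ - t)) := by ring
        linarith
      · rw [heq]; simp
      · have hle : σ ≤ (A t - A t₀) / (t - t₀) := csInf_le hbdd ⟨t, ⟨hgt, ht.2⟩, rfl⟩
        rw [le_div_iff₀ (by linarith)] at hle
        linarith
    have hub : σ ≤ (A 1 - A t₀) / (1 - t₀) := csInf_le hbdd ⟨1, ⟨h1, le_refl 1⟩, rfl⟩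
    have hlb' : (A t₀ - A 0) / (t₀ - 0) ≤ σ := le_csInf hne hlb
    rw [hA1, le_div_iff₀ (by linarith)] at hub
    rw [hA0, sub_zero, div_le_iff₀ h0] at hlb'
    have hP1 : t₀ ≤ A t₀ := le_trans (le_max_left _ _) (hA t₀ ht₀).1
    have hP2 : 1 - t₀ ≤ A t₀ := le_trans (le_max_right _ _) (hA t₀ ht₀).1
    refine ⟨A t₀ + σ * (1 - t₀), A t₀ - σ * t₀, ⟨?_, by linarith⟩, ⟨?_, by linarith⟩,
      fun t ht => ?_, by ring⟩
    · nlinarith [mul_le_mul_of_nonneg_right hlb' (by linarith : (0:ℝ) ≤ 1 - t₀)]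
    · nlinarith [mul_le_mul_of_nonneg_right hub h0.le]
    · calc (A t₀ + σ * (1 - t₀)) * t + (A t₀ - σ * t₀) * (1 - t)
          = A t₀ + σ * (t - t₀) := by ring
        _ ≤ A t := hsupp t ht

end Aux

theorem evCopula_stochIncr (A : ℝ → ℝ) (hconv : ConvexOn ℝ (Icc (0:ℝ) 1) A)
    (hA : ∀ t ∈ Icc (0:ℝ) 1, max t (1 - t) ≤ A t ∧ A t ≤ 1) :
    (∀ v ∈ Ioc (0:ℝ) 1, ConcaveOn ℝ (Icc (0:ℝ) 1) (fun u => EVCopula A u v)) ∧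
    (∀ u ∈ Ioc (0:ℝ) 1, ConcaveOn ℝ (Icc (0:ℝ) 1) (fun v => EVCopula A u v)) := by
  constructor
  · intro v hv
    apply concaveOn_of_majorants (convex_Icc 0 1)
    intro u₀ hu₀
    rcases eq_or_lt_of_le hu₀.1 with h0 | h0
    · refine ⟨fun u => u ^ (1:ℝ) * v ^ (0:ℝ),
        concave_pow_mul (by norm_num) (by norm_num) (Real.rpow_nonneg hv.1.le _),
        fun x hx => evBound A
          (fun t ht => by simpa using le_trans (le_max_left t (1 - t)) (hA t ht).1)
          x hx v ⟨hv.1.le, hv.2⟩, ?_⟩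
      rw [← h0]
      simp [EVCopula, Real.zero_rpow one_ne_zero]
    · have huo : u₀ ∈ Ioc (0:ℝ) 1 := ⟨h0, hu₀.2⟩
      obtain ⟨a, b, ha, hb, hline, htouch⟩ := supporting_line A hconv hA (tmem huo hv)
      exact ⟨fun u => u ^ a * v ^ b,
        concave_pow_mul ha.1 ha.2 (Real.rpow_nonneg hv.1.le _),
        fun x hx => evBound A hline x hx v ⟨hv.1.le, hv.2⟩,
        evTouch A huo hv htouch⟩
  · intro u hu
    apply concaveOn_of_majorants (convex_Icc 0 1)
    intro v₀ hv₀
    rcases eq_or_lt_of_le hv₀.1 with h0 | h0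
    · refine ⟨fun x => u ^ (0:ℝ) * x ^ (1:ℝ),
        concave_mul_pow (by norm_num) (by norm_num) (Real.rpow_nonneg hu.1.le _),
        fun x hx => evBound A
          (fun t ht => by simpa using le_trans (le_max_right t (1 - t)) (hA t ht).1)
          u ⟨hu.1.le, hu.2⟩ x hx, ?_⟩
      rw [← h0]
      simp [EVCopula, Real.zero_rpow one_ne_zero]
    · have hvo : v₀ ∈ Ioc (0:ℝ) 1 := ⟨h0, hv₀.2⟩
      obtain ⟨a, b, ha, hb, hline, htouch⟩ := supporting_line A hconv hA (tmem hu hvo)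
      exact ⟨fun x => u ^ a * x ^ b,
        concave_mul_pow hb.1 hb.2 (Real.rpow_nonneg hu.1.le _),
        fun x hx => evBound A hline u ⟨hu.1.le, hu.2⟩ x hx,
        evTouch A hu hvo htouch⟩
end
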